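/- arXiv:2210.02514 — 5 statements merged into one kernel-verified Lean document; each statement's English description precedes it below -/
import Mathlib

section
/- Suppose M is a δ-guessing elementary submodel, θ ∈ M is a cardinal with cof(θ) ≥ δ, λ = cof(sup(M ∩ θ)), and M is closed under sequences of length < λ that are bounded in M. Then |M| ≥ 2^λ. -/
open Cardinal

namespace GM

/-- The first-order language of set theory: a single binary relation. -/
def memLang : FirstOrder.Language :=
  { Functions := fun _ => Empty
    Relations := fun n => match n with | 2 => Unit | _ => Empty }

/-- Any set of ZF sets is a structure for the membership language,
interpreting the relation by `∈`. -/
instance setStructure (S : Set ZFSet) : memLang.Structure S where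
  funMap {n} f _ := f.elim
  RelMap {n} r v :=
    match n, r, v with
    | 2, _, v => ((v 0 : ↥S) : ZFSet) ∈ ((v 1 : ↥S) : ZFSet)
    | 0, r, _ => r.elim
    | 1, r, _ => r.elim
    | (_+3), r, _ => r.elim

/-- `M` is an elementary submodel of `H` (both viewed as ∈-structures). -/
def ElemSub (M H : Set ZFSet) : Prop :=
  ∃ h : M ⊆ H, ∀ (n : ℕ) (φ : memLang.Formula (Fin n)) (v : Fin n → M),
    φ.Realize (fun i => Set.inclusion h (v i)) ↔ φ.Realize v

/-- `x` is guessed in `M`: some `y ∈ M` has the same trace on `M` as `x`. -/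
def Guessed (x : ZFSet) (M : Set ZFSet) : Prop :=
  ∃ y ∈ M, y.toSet ∩ M = x.toSet ∩ M

/-- `x` is bounded in `M`: `x` is a subset of an element of `M`. -/
def Bounded (x : ZFSet) (M : Set ZFSet) : Prop :=
  ∃ y ∈ M, x.toSet ⊆ y.toSet

/-- `x` is δ-approximated in `M`: all intersections with `<δ`-sized elements of `M` lie in `M`. -/
def Approx (δ : Cardinal.{1}) (x : ZFSet) (M : Set ZFSet) : Prop :=
  ∀ a ∈ M, #a.toSet < δ → (x ∩ a) ∈ M

/-- `M` has the δ-guessing property (in `V`). -/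
def IsGuessing (δ : Cardinal.{1}) (M : Set ZFSet) : Prop :=
  ∀ x : ZFSet, Bounded x M → Approx δ x M → Guessed x M

/-- `M` has the δ-guessing property in `N`. -/
def IsGuessingIn (δ : Cardinal.{1}) (M N : Set ZFSet) : Prop :=
  ∀ x ∈ N, Bounded x M → Approx δ x M → Guessed x M

/-- The pair `(M, N)` has the δ-covering property (`≤ δ`-sized sets version). -/
def CoveringPair (δ : Cardinal.{1}) (M N : Set ZFSet) : Prop :=
  ∀ x ∈ N, #x.toSet ≤ δ → Bounded x M →
    ∃ y ∈ M, #y.toSet ≤ δ ∧ x.toSet ∩ M ⊆ y.toSet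

/-- A transitive class. -/
def Transitive' (H : Set ZFSet) : Prop := ∀ x ∈ H, x.toSet ⊆ H

/-- A powerful model: transitive and containing every set bounded in it. -/
def Powerful (H : Set ZFSet) : Prop :=
  Transitive' H ∧ ∀ x : ZFSet, Bounded x H → x ∈ H

/-- `κ` is `κ_M`: the least ordinal belonging to `M` but not a subset of `M`. -/
def IsKappa (M : Set ZFSet) (κ : ZFSet) : Prop :=
  κ.IsOrdinal ∧ κ ∈ M ∧ ¬ κ.toSet ⊆ M ∧
    ∀ β : ZFSet, β.IsOrdinal → β ∈ M → ¬ β.toSet ⊆ M → κ.toSet ⊆ β.toSet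

/-- A δ-guessing elementary submodel: an elementary submodel of some powerful
model with the δ-guessing property. -/
def IsGesm (δ : Cardinal.{1}) (M : Set ZFSet) : Prop :=
  (∃ H : Set ZFSet, Powerful H ∧ ElemSub M H) ∧ IsGuessing δ M

/-- The cofinality of the supremum of a set of (ZF-set) ordinals: the least
cardinality of a `⊆`-cofinal subset. -/
noncomputable def cofSup (A : Set ZFSet) : Cardinal.{1} :=
  sInf { c | ∃ B ⊆ A, #B = c ∧ ∀ x ∈ A, ∃ y ∈ B, x.toSet ⊆ y.toSet }

/-- Hereditarily of cardinality less than `θ`. -/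
inductive Hered (θ : Cardinal.{1}) : ZFSet → Prop
  | intro (x : ZFSet) : #x.toSet < θ → (∀ y ∈ x.toSet, Hered θ y) → Hered θ x

/-- The class `H_θ` of sets hereditarily of cardinality `< θ`. -/
def HSet (θ : Cardinal.{1}) : Set ZFSet := {x | Hered θ x}

/-- `S` is stationary in `𝒫_κ(X)`: every function `F` from finite subsets of `X`
to `<κ`-sized subsets of `X` has a closure point in `S`. -/
def StationaryIn (S : Set (Set ZFSet)) (X : Set ZFSet) (κ : Cardinal.{1}) : Prop :=
  ∀ F : Finset ZFSet → Set ZFSet, (∀ a : Finset ZFSet, F a ⊆ X ∧ #(F a) < κ) →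
    ∃ A ∈ S, A ⊆ X ∧ #A < κ ∧ ∀ a : Finset ZFSet, ↑a ⊆ A → F a ⊆ A

/-- The guessing model principle witnessed by models with property `P`:
for all sufficiently large regular `θ` there are stationarily many `<κ`-sized
δ-guessing elementary submodels of `H_θ` satisfying `P`. -/
def GMPwit (κ δ : Cardinal.{1}) (P : Set ZFSet → Prop) : Prop :=
  ∃ θ₀ : Cardinal.{1}, ∀ θ : Cardinal.{1}, θ₀ ≤ θ → θ.IsRegular →
    StationaryIn {M | ElemSub M (HSet θ) ∧ IsGuessing δ M ∧ #M < κ ∧ P M}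
      (HSet θ) κ

/-- The guessing model principle `GMP(κ, δ)`. -/
def GMP (κ δ : Cardinal.{1}) : Prop := GMPwit κ δ fun _ => True

/-- `R` is a binary relation on `T` (a set of ordered pairs from `T`). -/
def IsRel (T R : ZFSet) : Prop :=
  ∀ p ∈ R.toSet, ∃ s ∈ T.toSet, ∃ t ∈ T.toSet, p = ZFSet.pair s t

/-- The set of `R`-predecessors of `t` in `T`. -/
def Pred (T R t : ZFSet) : Set ZFSet := {s | s ∈ T.toSet ∧ ZFSet.pair s t ∈ R}

/-- `t` has level `α` in the tree `(T, R)`: the predecessors of `t` are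
order-isomorphic to the ordinal `α`. -/
def HasLevel (T R t α : ZFSet) : Prop :=
  α.IsOrdinal ∧ ∃ e : α.toSet ≃ Pred T R t,
    ∀ a b : α.toSet, (a : ZFSet) ∈ (b : ZFSet) ↔ ZFSet.pair (e a : ZFSet) (e b : ZFSet) ∈ R

/-- `(T, R)` is a tree of height the ordinal `Λ`. -/
def IsTreeOfHeight (T R Λ : ZFSet) : Prop :=
  Λ.IsOrdinal ∧ IsRel T R ∧
  (∀ s t u : ZFSet, ZFSet.pair s t ∈ R → ZFSet.pair t u ∈ R → ZFSet.pair s u ∈ R) ∧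
  (∀ t : ZFSet, ZFSet.pair t t ∉ R) ∧
  (∀ t ∈ T.toSet, ∃ α ∈ Λ.toSet, HasLevel T R t α) ∧
  (∀ α ∈ Λ.toSet, ∃ t ∈ T.toSet, HasLevel T R t α)

/-- `b` is a cofinal branch through the tree `(T, R)` of height `Λ`. -/
def IsBranch (T R Λ b : ZFSet) : Prop :=
  b.toSet ⊆ T.toSet ∧
  (∀ s ∈ b.toSet, ∀ t ∈ b.toSet, s = t ∨ ZFSet.pair s t ∈ R ∨ ZFSet.pair t s ∈ R) ∧
  ∀ α ∈ Λ.toSet, ∃ t ∈ b.toSet, HasLevel T R t α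

/-- Every level of `(T, R)` has size `< κ`. -/
def SlimTree (T R Λ : ZFSet) (κ : Cardinal.{1}) : Prop :=
  ∀ α ∈ Λ.toSet, #{t : ZFSet | t ∈ T.toSet ∧ HasLevel T R t α} < κ

/-- `Λ` is (as a ZF-set ordinal) the cardinal `c`: an ordinal of cardinality `c`
all of whose elements have cardinality `< c`. -/
def IsCardOrd (Λ : ZFSet) (c : Cardinal.{1}) : Prop :=
  Λ.IsOrdinal ∧ #Λ.toSet = c ∧ ∀ β ∈ Λ.toSet, #β.toSet < c

/-- `M` is closed under `<μ`-sized subsets (as sets of its elements). -/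
def ClosedUnder (μ : Cardinal.{1}) (M : Set ZFSet) : Prop :=
  ∀ A : Set ZFSet, A ⊆ M → #A < μ → ∃ z ∈ M, z.toSet = A

/-- `M` is closed under `<μ`-sized subsets which are bounded in `M`. -/
def SeqClosed (μ : Cardinal.{1}) (M : Set ZFSet) : Prop :=
  ∀ A : Set ZFSet, A ⊆ M → #A < μ → (∃ y ∈ M, A ⊆ y.toSet) → ∃ z ∈ M, z.toSet = A

/-- `β` is a limit point of the set (of ordinals) `c`. -/
def LimPt (c β : ZFSet) : Prop :=
  β ≠ ∅ ∧ ∀ γ ∈ β.toSet, ∃ ξ ∈ c.toSet, ξ ∈ β.toSet ∧ (γ ∈ ξ.toSet ∨ γ = ξ)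

/-- `c` is a club in the ordinal `α`. -/
def ClubIn (c α : ZFSet) : Prop :=
  c.toSet ⊆ α.toSet ∧ (∀ β ∈ α.toSet, ∃ γ ∈ c.toSet, β ∈ γ.toSet ∨ β = γ) ∧
  ∀ β ∈ α.toSet, LimPt c β → β ∈ c.toSet

/-- `c` has order type the ordinal `o`. -/
def HasOtp (c o : ZFSet) : Prop :=
  o.IsOrdinal ∧ ∃ e : o.toSet ≃ c.toSet,
    ∀ a b : o.toSet, (a : ZFSet) ∈ (b : ZFSet) ↔ ((e a : ZFSet) ∈ (e b : ZFSet))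

/-- `f` is (the graph of) a function from `a` to `b`. -/
def IsFuncRel (f a b : ZFSet) : Prop :=
  (∀ p ∈ f.toSet, ∃ x ∈ a.toSet, ∃ y ∈ b.toSet, p = ZFSet.pair x y) ∧
  ∀ x ∈ a.toSet, ∃! y : ZFSet, ZFSet.pair x y ∈ f

/-- `f` is a surjection from `a` onto `b`. -/
def SurjOnto (f a b : ZFSet) : Prop :=
  IsFuncRel f a b ∧ ∀ y ∈ b.toSet, ∃ x ∈ a.toSet, ZFSet.pair x y ∈ f

/-- `θ` is a cardinal in the (transitive) class `V`: an ordinal not surjected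
onto by any smaller ordinal via a function of `V`. -/
def IsCardinalIn (V : Set ZFSet) (θ : ZFSet) : Prop :=
  θ.IsOrdinal ∧ ∀ β ∈ θ.toSet, ∀ f ∈ V, ¬ SurjOnto f β θ

/-- A dense subset of a preorder. -/
def DenseSub (P : Type) [Preorder P] (D : Set P) : Prop := ∀ p : P, ∃ q ∈ D, q ≤ p

/-- A subset of a preorder dense below `p₀`. -/
def DenseBelow (P : Type) [Preorder P] (p₀ : P) (D : Set P) : Prop :=
  ∀ p : P, p ≤ p₀ → ∃ q ∈ D, q ≤ p

/-- A filter on a preorder. -/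
def IsFilterSet (P : Type) [Preorder P] (F : Set P) : Prop :=
  F.Nonempty ∧ (∀ p ∈ F, ∀ q : P, p ≤ q → q ∈ F) ∧
    ∀ p ∈ F, ∀ q ∈ F, ∃ r ∈ F, r ≤ p ∧ r ≤ q

/-- The forcing axiom `FA(P, κ)`: any κ-many dense sets are met by a filter. -/
def FA (P : Type) [Preorder P] (κ : Cardinal.{1}) : Prop :=
  ∀ 𝒟 : Set (Set P), Cardinal.lift.{1} #𝒟 ≤ κ →
    (∀ D ∈ 𝒟, DenseSub P D) →
    ∃ F : Set P, IsFilterSet P F ∧ ∀ D ∈ 𝒟, (F ∩ D).Nonempty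

end GM



namespace GMaux
open FirstOrder FirstOrder.Language GM Cardinal Ordinal

theorem ord_of_mem {x y : ZFSet} (hx : x.IsOrdinal) (h : y ∈ x) : y.IsOrdinal := by
  constructor
  · intro z hz w hw
    exact hx.mem_trans' hw hz h
  · intro a b c hab hbc hcy
    have hcx : c ∈ x := hx.mem_trans hcy h
    exact hx.mem_trans' hab hbc hcx

theorem ord_tri {x : ZFSet} (hx : x.IsOrdinal) : ∀ {y : ZFSet}, y.IsOrdinal →
    (x ∈ y ∨ x = y ∨ y ∈ x) := by
  induction x using ZFSet.inductionOn with
  | h x IHx =>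
  intro y
  induction y using ZFSet.inductionOn with
  | h y IHy =>
  intro hy
  by_cases hsub : x ⊆ y
  · by_cases hsub' : y ⊆ x
    · exact Or.inr (Or.inl (ZFSet.ext fun z => ⟨fun h => hsub h, fun h => hsub' h⟩))
    · obtain ⟨w, hwy, hwx⟩ : ∃ w ∈ y, w ∉ x := by
        by_contra h
        push_neg at h
        exact hsub' h
      rcases IHy w hwy (ord_of_mem hy hwy) with h | h | h
      · exact Or.inl (hy.mem_trans h hwy)
      · exact Or.inl (h ▸ hwy)
      · exact absurd h hwx
  · obtain ⟨z, hzx, hzy⟩ : ∃ z ∈ x, z ∉ y := by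
      by_contra h
      push_neg at h
      exact hsub h
    rcases IHx z hzx (ord_of_mem hx hzx) hy with h | h | h
    · exact absurd h hzy
    · exact Or.inr (Or.inr (h ▸ hzx))
    · exact Or.inr (Or.inr (hx.mem_trans h hzx))

theorem mem_of_not_subset {x y : ZFSet} (hx : x.IsOrdinal) (hy : y.IsOrdinal)
    (h : ¬ x ⊆ y) : y ∈ x := by
  rcases ord_tri hx hy with h' | h' | h'
  · exact absurd (hy.subset_of_mem h') h
  · exact absurd (h' ▸ subset_rfl) h
  · exact h'

theorem subset_of_not_mem {x y : ZFSet} (hx : x.IsOrdinal) (hy : y.IsOrdinal)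
    (h : ¬ y ∈ x) : x ⊆ y := by
  rcases ord_tri hx hy with h' | h' | h'
  · exact hy.subset_of_mem h'
  · exact h' ▸ subset_rfl
  · exact absurd h' h

theorem zf_mem_irrefl (x : ZFSet) : ¬ x ∈ x := fun h =>
  (ZFSet.mem_wf.isIrrefl.irrefl x) h

theorem _root_.ZFSet.mem_toSet (a u : ZFSet) : a ∈ u.toSet ↔ a ∈ u := Iff.rfl

theorem _root_.ZFSet.toSet_subset_iff {x y : ZFSet} : x.toSet ⊆ y.toSet ↔ x ⊆ y :=
  ⟨fun h _ hz => h hz, fun h _ hz => h hz⟩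

theorem _root_.ZFSet.toSet_injective : Function.Injective ZFSet.toSet := SetLike.coe_injective

theorem cof_type_le' {α : Type*} (r : α → α → Prop) [IsWellOrder α r] {S : Set α}
    (h : ∀ a, ∃ b ∈ S, ¬ r b a) : Ordinal.cof (Ordinal.type r) ≤ #S := by
  letI : LinearOrder α := IsWellOrder.linearOrder r
  haveI : WellFoundedLT α := ⟨(IsWellFounded.wf : WellFounded r)⟩
  have : Ordinal.type r = Ordinal.type (α := α) (· < ·) := rfl
  rw [this, Ordinal.cof_type]
  apply Order.cof_le
  intro a
  obtain ⟨b, hb, hba⟩ := h a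
  exact ⟨b, hb, not_lt.mp (by exact hba)⟩

instance subrelWO {α : Type*} (r : α → α → Prop) [IsWellOrder α r] (S : Set α) :
    IsWellOrder (Subtype S) (Subrel r S) :=
  inferInstanceAs (IsWellOrder S (Subrel r (· ∈ S)))

instance subrelWO' {α : Type*} (r : α → α → Prop) [IsWellOrder α r] (S : Set α) :
    IsWellOrder (↥S) (Subrel r S) :=
  inferInstanceAs (IsWellOrder S (Subrel r (· ∈ S)))

theorem ord_cof_eq' {α : Type*} (r : α → α → Prop) [IsWellOrder α r] :
    ∃ S : Set α, (∀ a, ∃ b ∈ S, ¬ r b a) ∧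
      Ordinal.type (α := ↥S) (Subrel r S) = (Ordinal.cof (Ordinal.type r)).ord := by
  letI : LinearOrder α := IsWellOrder.linearOrder r
  haveI : WellFoundedLT α := ⟨(IsWellFounded.wf : WellFounded r)⟩
  obtain ⟨s, hs, hs'⟩ := Ordinal.exists_ord_cof_eq α
  refine ⟨s, fun a => ?_, ?_⟩
  · obtain ⟨b, hb, hab⟩ := hs a
    exact ⟨b, hb, not_lt.mpr hab⟩
  · have : Ordinal.type r = Ordinal.type (α := α) (· < ·) := rfl
    rw [this, Ordinal.cof_type, ← hs']
    rfl

/-- Main combinatorial lemma: there is a cofinal subset all of whose proper initial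
segments are smaller than the least size of a cofinal subset. -/
theorem exists_good_cofinal (A : Set ZFSet) (hA : ∀ x ∈ A, x.IsOrdinal) :
    ∃ B ⊆ A, (∀ x ∈ A, ∃ y ∈ B, x.toSet ⊆ y.toSet) ∧
      ∀ γ ∈ A, #{β : ZFSet | β ∈ B ∧ β ∈ γ} < GM.cofSup A := by
  classical
  set r : ↥A → ↥A → Prop := fun a b => (a : ZFSet) ∈ (b : ZFSet) with hr
  haveI : IsTrans ↥A r := ⟨fun a b c hab hbc => (hA c c.2).mem_trans hab hbc⟩
  haveI : IsTrichotomous ↥A r := ⟨fun a b h1 h2 => by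
    rcases ord_tri (hA a a.2) (hA b b.2) with h | h | h
    · exact absurd h h1
    · exact Subtype.ext h
    · exact absurd h h2⟩
  haveI : IsWellFounded ↥A r := ⟨InvImage.wf Subtype.val ZFSet.mem_wf⟩
  haveI : IsWellOrder ↥A r := ⟨⟩
  obtain ⟨S, hSub, hStype⟩ := ord_cof_eq' r
  have hcof_le : Ordinal.cof (Ordinal.type r) ≤ GM.cofSup A := by
    have hmem : GM.cofSup A ∈
        {c | ∃ B ⊆ A, #B = c ∧ ∀ x ∈ A, ∃ y ∈ B, x.toSet ⊆ y.toSet} := by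
      unfold GM.cofSup
      apply csInf_mem
      exact ⟨#A, A, subset_rfl, rfl, fun x hx => ⟨x, hx, subset_rfl⟩⟩
    obtain ⟨B₀, hB₀A, hB₀card, hB₀cof⟩ := hmem
    have : Ordinal.cof (Ordinal.type r) ≤ #{a : ↥A | (a : ZFSet) ∈ B₀} := by
      apply cof_type_le' r
      intro a
      obtain ⟨y, hyB, hysub⟩ := hB₀cof a a.2
      refine ⟨⟨y, hB₀A hyB⟩, hyB, fun hmem => ?_⟩
      exact zf_mem_irrefl y (ZFSet.toSet_subset_iff.mp hysub hmem)
    have h2 : #{a : ↥A | (a : ZFSet) ∈ B₀} ≤ #↥B₀ :=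
      Cardinal.mk_le_of_injective (f := fun a => ⟨(a : ↥A), a.2⟩)
        (fun a b h => by
          have := congrArg (fun x : ↥B₀ => (x : ZFSet)) h
          exact Subtype.ext (Subtype.ext this))
    exact this.trans (hB₀card ▸ h2)
  refine ⟨Subtype.val '' S, by rintro x ⟨a, _, rfl⟩; exact a.2, ?_, ?_⟩
  · intro x hx
    obtain ⟨b, hbS, hb⟩ := hSub ⟨x, hx⟩
    refine ⟨b, ⟨b, hbS, rfl⟩, ZFSet.toSet_subset_iff.mpr ?_⟩
    exact subset_of_not_mem (hA x hx) (hA b b.2) hb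
  · intro γ hγ
    obtain ⟨e₀, he₀S, he₀⟩ := hSub ⟨γ, hγ⟩
    have hseg : #{b : ↥S // Subrel r S b ⟨e₀, he₀S⟩} < Ordinal.cof (Ordinal.type r) := by
      rw [← Ordinal.card_typein]
      rw [← Cardinal.lt_ord, ← hStype]
      exact Ordinal.typein_lt_type _ _
    have hγe₀ : γ ⊆ (e₀ : ZFSet) := subset_of_not_mem (hA γ hγ) (hA e₀ e₀.2) he₀
    have hinj : ∃ f : {β : ZFSet | β ∈ Subtype.val '' S ∧ β ∈ γ} →
        {b : ↥S // Subrel r S b ⟨e₀, he₀S⟩}, Function.Injective f := by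
      have hmk : ∀ β : {β : ZFSet | β ∈ Subtype.val '' S ∧ β ∈ γ},
          ∃ b : {b : ↥S // Subrel r S b ⟨e₀, he₀S⟩}, ((b : ↥S) : ↥A) = (β : ZFSet) := by
        rintro ⟨β, ⟨⟨a, haS, rfl⟩, hβγ⟩⟩
        exact ⟨⟨⟨a, haS⟩, hγe₀ hβγ⟩, rfl⟩
      choose f hf using hmk
      refine ⟨f, fun b₁ b₂ h => ?_⟩
      apply Subtype.ext
      have := congrArg
        (fun b : {b : ↥S // Subrel r S b ⟨e₀, he₀S⟩} => (((b : ↥S) : ↥A) : ZFSet)) h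
      simpa [hf b₁, hf b₂] using this
    obtain ⟨f, hfinj⟩ := hinj
    calc #{β : ZFSet | β ∈ Subtype.val '' S ∧ β ∈ γ}
        ≤ #{b : ↥S // Subrel r S b ⟨e₀, he₀S⟩} := Cardinal.mk_le_of_injective hfinj
      _ < Ordinal.cof (Ordinal.type r) := hseg
      _ ≤ GM.cofSup A := hcof_le

abbrev memRel : memLang.Relations 2 := ()

/-- `φbound`: ∃γ (γ ∈ v1 ∧ ∀y ((y ∈ v0 ∧ y ∈ v1) → y ∈ γ)) -/
def φbound : memLang.Formula (Fin 2) :=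
  BoundedFormula.ex
    ((memRel.boundedFormula₂ (&0) (FirstOrder.Language.Term.var (Sum.inl 1))) ⊓
      BoundedFormula.all
        (((memRel.boundedFormula₂ (&1) (Term.var (Sum.inl 0))) ⊓
          (memRel.boundedFormula₂ (&1) (Term.var (Sum.inl 1)))) ⟹
          (memRel.boundedFormula₂ (&1) (&0))))

theorem relMap_iff (S : Set ZFSet) (a b : ↥S) :
    Structure.RelMap (L := memLang) (M := ↥S) memRel ![a, b] ↔ (a : ZFSet) ∈ (b : ZFSet) :=
  Iff.rfl

theorem realize_φbound (S : Set ZFSet) (v : Fin 2 → ↥S) :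
    φbound.Realize v ↔ ∃ γ : ↥S, (γ : ZFSet) ∈ ((v 1 : ↥S) : ZFSet) ∧
      ∀ y : ↥S, (y : ZFSet) ∈ ((v 0 : ↥S) : ZFSet) → (y : ZFSet) ∈ ((v 1 : ↥S) : ZFSet) →
        (y : ZFSet) ∈ (γ : ZFSet) := by
  simp [φbound, Formula.Realize, FirstOrder.Language.BoundedFormula.realize_ex,
    BoundedFormula.realize_inf, BoundedFormula.realize_all, BoundedFormula.realize_imp,
    Fin.snoc, relMap_iff]

theorem bound_transfer (M H : Set ZFSet) (hMH : ElemSub M H)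
    (hHtrans : ∀ x ∈ H, x.toSet ⊆ H)
    (a θ : ZFSet) (haM : a ∈ M) (hθM : θ ∈ M)
    (γ₀ : ZFSet) (hγ₀ : γ₀ ∈ θ) (hbnd : ∀ y : ZFSet, y ∈ a → y ∈ θ → y ∈ γ₀) :
    ∃ γ ∈ M, γ ∈ θ ∧ ∀ y ∈ M, y ∈ a → y ∈ θ → y ∈ γ := by
  obtain ⟨hsub, helem⟩ := hMH
  set v : Fin 2 → ↥M := ![⟨a, haM⟩, ⟨θ, hθM⟩] with hv
  have hH : φbound.Realize (fun i => Set.inclusion hsub (v i)) := by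
    rw [realize_φbound]
    have hγ₀H : γ₀ ∈ H := hHtrans θ (hsub hθM) ((ZFSet.mem_toSet _ _).mpr hγ₀)
    refine ⟨⟨γ₀, hγ₀H⟩, by simpa [hv] using hγ₀, ?_⟩
    intro y h1 h2
    exact hbnd y (by simpa [hv] using h1) (by simpa [hv] using h2)
  rw [helem 2 φbound v, realize_φbound] at hH
  obtain ⟨γ, hγθ, hγbnd⟩ := hH
  refine ⟨γ, γ.2, by simpa [hv] using hγθ, fun y hyM hya hyθ => ?_⟩
  simpa [hv] using hγbnd ⟨y, hyM⟩ (by simpa [hv] using hya) (by simpa [hv] using hyθ)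

end GMaux

/-- a sufficiently closed δ-gesm has size at least `2 ^ cof(sup(M ∩ θ))`. -/
theorem stmt2
    (δ : Cardinal.{1}) (M : Set ZFSet) (hM : GM.IsGesm δ M)
    (θ : ZFSet) (hθcard : GM.IsCardOrd θ #θ.toSet) (hθM : θ ∈ M)
    (hcof : δ ≤ GM.cofSup θ.toSet)
    (lam : Cardinal.{1}) (hlam : lam = GM.cofSup {x | x ∈ M ∧ x ∈ θ.toSet})
    (hclosed : GM.SeqClosed lam M) :
    2 ^ lam ≤ #M := by
  classical
  obtain ⟨⟨H, ⟨hHtrans, hHpow⟩, hElem⟩, hGuess⟩ := hM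
  set C : Set ZFSet := {x | x ∈ M ∧ x ∈ θ.toSet} with hC
  have hθord : θ.IsOrdinal := hθcard.1
  have hCord : ∀ x ∈ C, x.IsOrdinal := fun x hx =>
    GMaux.ord_of_mem hθord ((ZFSet.mem_toSet _ _).mp hx.2)
  obtain ⟨B, hBC, hBcof, hBseg⟩ := GMaux.exists_good_cofinal C hCord
  have hBM : ∀ x ∈ B, x ∈ M := fun x hx => (hBC hx).1
  have hBθ : ∀ x ∈ B, x ∈ θ := fun x hx => (ZFSet.mem_toSet _ _).mp (hBC hx).2
  have hlamB : lam ≤ #B := by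
    rw [hlam]
    exact csInf_le' ⟨B, hBC, rfl, hBcof⟩
  -- for every `X ⊆ B` there is a guess `yX ∈ M` with `yX.toSet ∩ M = X`
  have key : ∀ X : Set ZFSet, X ⊆ B → ∃ y ∈ M, y.toSet ∩ M = X := by
    intro X hXB
    have hXθ : ∀ z ∈ X, z ∈ θ := fun z hz => hBθ z (hXB hz)
    have hXM : ∀ z ∈ X, z ∈ M := fun z hz => hBM z (hXB hz)
    set xX : ZFSet := ZFSet.sep (· ∈ X) θ with hxX
    have hxXts : xX.toSet = X := by
      ext z
      simp only [hxX, ZFSet.mem_toSet, ZFSet.mem_sep]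
      exact ⟨fun h => h.2, fun h => ⟨hXθ z h, h⟩⟩
    have hbounded : GM.Bounded xX M := by
      refine ⟨θ, hθM, ?_⟩
      rw [hxXts]
      intro z hz
      exact (ZFSet.mem_toSet _ _).mpr (hXθ z hz)
    have happrox : GM.Approx δ xX M := by
      intro a haM hacard
      -- `a ∩ θ` is not cofinal in `θ.toSet`, so it is bounded by some `γ₀ ∈ θ`
      have hnotcof : ¬ ∀ x ∈ θ.toSet, ∃ y ∈ a.toSet ∩ θ.toSet, x.toSet ⊆ y.toSet := by
        intro hcf
        have h1 : GM.cofSup θ.toSet ≤ #(a.toSet ∩ θ.toSet : Set ZFSet) :=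
          csInf_le' ⟨a.toSet ∩ θ.toSet, Set.inter_subset_right, rfl, hcf⟩
        have h2 : #(a.toSet ∩ θ.toSet : Set ZFSet) ≤ #a.toSet :=
          Cardinal.mk_le_mk_of_subset Set.inter_subset_left
        exact absurd ((hcof.trans h1).trans h2) (not_le.mpr hacard)
      push_neg at hnotcof
      obtain ⟨γ₀, hγ₀θ, hγ₀bnd⟩ := hnotcof
      have hγ₀ord : γ₀.IsOrdinal := GMaux.ord_of_mem hθord ((ZFSet.mem_toSet _ _).mp hγ₀θ)
      have hbnd : ∀ y : ZFSet, y ∈ a → y ∈ θ → y ∈ γ₀ := by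
        intro y hya hyθ
        have hyord : y.IsOrdinal := GMaux.ord_of_mem hθord hyθ
        have := hγ₀bnd y ⟨(ZFSet.mem_toSet _ _).mpr hya, (ZFSet.mem_toSet _ _).mpr hyθ⟩
        exact GMaux.mem_of_not_subset hγ₀ord hyord
          (fun hsub => this (ZFSet.toSet_subset_iff.mpr hsub))
      obtain ⟨γ, hγM, hγθ, hγbnd⟩ := GMaux.bound_transfer M H ⟨hElem.choose, hElem.choose_spec⟩
        hHtrans a θ haM hθM γ₀ ((ZFSet.mem_toSet _ _).mp hγ₀θ) hbnd
      have hγC : γ ∈ C := ⟨hγM, (ZFSet.mem_toSet _ _).mpr hγθ⟩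
      -- `(xX ∩ a).toSet` is an initial segment of `B` below `γ`, hence small
      have hsubseg : ((xX ∩ a).toSet : Set ZFSet) ⊆ {β : ZFSet | β ∈ B ∧ β ∈ γ} := by
        intro z hz
        have hz' := (ZFSet.mem_toSet _ _).mp hz
        rw [ZFSet.mem_inter] at hz'
        obtain ⟨hz1, hz2⟩ := hz'
        have hzX : z ∈ X := by
          have := (ZFSet.mem_toSet _ _).mpr hz1
          rw [hxXts] at this
          exact this
        exact ⟨hXB hzX, hγbnd z (hXM z hzX) hz2 (hXθ z hzX)⟩
      have hsmall : #((xX ∩ a).toSet : Set ZFSet) < lam := by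
        rw [hlam]
        exact lt_of_le_of_lt (Cardinal.mk_le_mk_of_subset hsubseg) (hBseg γ hγC)
      have hsubM : ((xX ∩ a).toSet : Set ZFSet) ⊆ M := fun z hz => by
        have := hsubseg hz
        exact hBM z this.1
      obtain ⟨z, hzM, hzts⟩ := hclosed ((xX ∩ a).toSet) hsubM hsmall
        ⟨θ, hθM, fun w hw => by
          have h3 := (ZFSet.mem_toSet _ _).mp hw
          rw [ZFSet.mem_inter] at h3
          have h4 : w ∈ X := by
            have := (ZFSet.mem_toSet _ _).mpr h3.1
            rwa [hxXts] at this
          exact (ZFSet.mem_toSet _ _).mpr (hXθ w h4)⟩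
      have : z = xX ∩ a := ZFSet.toSet_injective hzts
      exact this ▸ hzM
    obtain ⟨y, hyM, hyts⟩ := hGuess xX hbounded happrox
    refine ⟨y, hyM, ?_⟩
    rw [hyts, hxXts]
    exact Set.inter_eq_left.mpr fun z hz => hXM z hz
  -- build an injection from `Set ↥B` into `↥M`
  have hex : ∀ s : Set ↥B, ∃ y : ↥M, (y : ZFSet).toSet ∩ M = Subtype.val '' s := by
    intro s
    obtain ⟨y, hyM, hy⟩ := key (Subtype.val '' s) (by rintro z ⟨w, _, rfl⟩; exact w.2)
    exact ⟨⟨y, hyM⟩, hy⟩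
  choose F hF using hex
  have hFinj : Function.Injective F := by
    intro s₁ s₂ h
    have : Subtype.val '' s₁ = Subtype.val '' s₂ := by
      rw [← hF s₁, ← hF s₂, h]
    exact Set.image_injective.mpr Subtype.val_injective this
  calc 2 ^ lam ≤ 2 ^ #B := by
        exact Cardinal.power_le_power_left two_ne_zero hlamB
    _ = #(Set ↥B) := (Cardinal.mk_set).symm
    _ ≤ #M := Cardinal.mk_le_of_injective hFinj
end

section
/- If GMP(δ⁺, δ) holds (there are stationarily many δ-guessing elementary submodels of size < δ⁺ of every sufficiently large H_θ), then there is no weak Kurepa tree at δ: every tree of height and size δ has at most δ cofinal branches. -/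
open Cardinal

namespace K


lemma memOrd {x y : ZFSet} (hx : x.IsOrdinal) (h : y ∈ x) : y.IsOrdinal := by
  constructor
  · intro z hz w hw
    exact hx.mem_trans' hw hz h
  · intro a b c hab hbc hcy
    exact hx.mem_trans' hab hbc (hx.mem_trans hcy h)

lemma tri : ∀ x : ZFSet, ∀ y : ZFSet, x.IsOrdinal → y.IsOrdinal → (x ∈ y ∨ x = y ∨ y ∈ x) := by
  intro x
  induction x using ZFSet.mem_wf.induction with
  | _ x IHx =>
  intro y
  induction y using ZFSet.mem_wf.induction with
  | _ y IHy =>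
  intro hx hy
  by_cases hxy : x ∈ y
  · exact Or.inl hxy
  by_cases hyx : y ∈ x
  · exact Or.inr (Or.inr hyx)
  refine Or.inr (Or.inl (ZFSet.ext fun z => ⟨fun hz => ?_, fun hz => ?_⟩))
  · rcases IHx z hz y (memOrd hx hz) hy with h | h | h
    · exact h
    · exact absurd (h ▸ hz) hyx
    · exact absurd (hx.mem_trans h hz) hyx
  · rcases IHy z hz hx (memOrd hy hz) with h | h | h
    · exact absurd (hy.mem_trans h hz) hxy
    · exact absurd (h ▸ hz) hxy
    · exact h

lemma rigid {α β : ZFSet} (hα : α.IsOrdinal) (hβ : β.IsOrdinal)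
    (e : α.toSet ≃ β.toSet)
    (he : ∀ a b : α.toSet, (a : ZFSet) ∈ (b : ZFSet) ↔ ((e a : ZFSet) ∈ (e b : ZFSet))) :
    α = β := by
  have key : ∀ x : ZFSet, ∀ hx : x ∈ α.toSet, ((e ⟨x, hx⟩ : ZFSet)) = x := by
    intro x
    induction x using ZFSet.mem_wf.induction with
    | _ x IH =>
    intro hx
    apply ZFSet.ext
    intro z
    constructor
    · intro hz
      have hzβ : z ∈ β.toSet := hβ.mem_trans hz ((e ⟨x, hx⟩).2)
      set w := e.symm ⟨z, hzβ⟩ with hw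
      have hew : ((e w : ZFSet)) = z := by rw [hw, Equiv.apply_symm_apply]
      have hwx : (w : ZFSet) ∈ x := by
        rw [he w ⟨x, hx⟩, hew]; exact hz
      have h2 := IH _ hwx w.2
      simp only [Subtype.eta] at h2
      rw [← hew, h2]
      exact hwx
    · intro hz
      have hzα : z ∈ α.toSet := hα.mem_trans hz hx
      have h1 := IH z hz hzα
      have h2 := (he ⟨z, hzα⟩ ⟨x, hx⟩).1 hz
      rwa [h1] at h2
  apply ZFSet.ext
  intro z
  constructor
  · intro hz
    have := key z hz
    rw [← this]
    exact (e ⟨z, hz⟩).2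
  · intro hz
    have h1 := key _ (e.symm ⟨z, hz⟩).2
    have : ((e (e.symm ⟨z, hz⟩) : ZFSet)) = z := by rw [Equiv.apply_symm_apply]
    simp only [Subtype.eta] at h1
    rw [this] at h1
    have h3 := (e.symm ⟨z, hz⟩).2
    rw [← h1] at h3
    exact h3


lemma levelUnique {T R t β γ : ZFSet} (hβ : GM.HasLevel T R t β) (hγ : GM.HasLevel T R t γ) :
    β = γ := by
  obtain ⟨hβord, e₁, p₁⟩ := hβ
  obtain ⟨hγord, e₂, p₂⟩ := hγ
  refine rigid hβord hγord (e₁.trans e₂.symm) ?_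
  intro a b
  rw [p₁ a b]
  have := p₂ (e₂.symm (e₁ a)) (e₂.symm (e₁ b))
  simp only [Equiv.apply_symm_apply] at this
  rw [← this]
  rfl

lemma levelLT {T R : ZFSet}
    (hRtrans : ∀ s t u : ZFSet, ZFSet.pair s t ∈ R → ZFSet.pair t u ∈ R → ZFSet.pair s u ∈ R)
    {s t β γ : ZFSet} (hs : s ∈ T.toSet) (hst : ZFSet.pair s t ∈ R)
    (hβ : GM.HasLevel T R s β) (hγ : GM.HasLevel T R t γ) : β ∈ γ := by
  obtain ⟨hβord, e₁, p₁⟩ := hβ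
  obtain ⟨hγord, e₂, p₂⟩ := hγ
  have hsPred : s ∈ GM.Pred T R t := ⟨hs, hst⟩
  set x₀ : γ.toSet := e₂.symm ⟨s, hsPred⟩ with hx₀def
  have hx₀ : ((e₂ x₀ : ZFSet)) = s := by rw [hx₀def, Equiv.apply_symm_apply]
  have hx₀γ : (x₀ : ZFSet) ∈ γ := x₀.2
  -- the map from β.toSet into (↑x₀).toSet
  have hPst : ∀ u : GM.Pred T R s, (u : ZFSet) ∈ GM.Pred T R t :=
    fun u => ⟨u.2.1, hRtrans _ _ _ u.2.2 hst⟩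
  set v : β.toSet → γ.toSet := fun a => e₂.symm ⟨(e₁ a : ZFSet), hPst (e₁ a)⟩ with hvdef
  have hv : ∀ a, ((e₂ (v a) : ZFSet)) = ((e₁ a : ZFSet)) := by
    intro a; rw [hvdef]; simp
  have hmem : ∀ a, ((v a : ZFSet)) ∈ ((x₀ : ZFSet)) := by
    intro a
    rw [p₂ (v a) x₀, hv, hx₀]
    exact (e₁ a).2.2
  set g : β.toSet → ((x₀ : ZFSet)).toSet := fun a => ⟨(v a : ZFSet), hmem a⟩ with hgdef
  have hvinj : Function.Injective v := by
    intro a b hab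
    apply e₁.injective
    apply Subtype.ext
    have := congrArg (fun w => ((e₂ w : ZFSet))) hab
    simpa [hv] using this
  have hginj : Function.Injective g := by
    intro a b hab
    have h1 := congrArg Subtype.val hab
    exact hvinj (Subtype.ext h1)
  have hgsurj : Function.Surjective g := by
    intro z
    have hzx₀ : (z : ZFSet) ∈ ((x₀ : ZFSet)) := z.2
    have hzγ : (z : ZFSet) ∈ γ.toSet := hγord.mem_trans hzx₀ hx₀γ
    set zg : γ.toSet := ⟨z, hzγ⟩ with hzgdef
    have hzR : ZFSet.pair ((e₂ zg : ZFSet)) s ∈ R := by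
      have := (p₂ zg x₀).1 hzx₀
      rwa [hx₀] at this
    set u' : GM.Pred T R s := ⟨((e₂ zg : ZFSet)), ⟨(e₂ zg).2.1, hzR⟩⟩ with hu'def
    refine ⟨e₁.symm u', ?_⟩
    apply Subtype.ext
    show ((v (e₁.symm u') : ZFSet)) = (z : ZFSet)
    have h1 : ((e₂ (v (e₁.symm u')) : ZFSet)) = ((e₂ zg : ZFSet)) := by
      rw [hv]; simp [hu'def]
    have h2 : v (e₁.symm u') = zg := e₂.injective (Subtype.ext h1)
    rw [h2]
  set geq : β.toSet ≃ ((x₀ : ZFSet)).toSet := Equiv.ofBijective g ⟨hginj, hgsurj⟩ with hgeq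
  have hx₀ord : ((x₀ : ZFSet)).IsOrdinal := memOrd hγord hx₀γ
  have : β = (x₀ : ZFSet) := by
    refine rigid hβord hx₀ord geq ?_
    intro a b
    have hga : ((geq a : ZFSet)) = ((v a : ZFSet)) := rfl
    have hgb : ((geq b : ZFSet)) = ((v b : ZFSet)) := rfl
    rw [hga, hgb, p₁ a b]
    constructor
    · intro h
      refine (p₂ (v a) (v b)).2 ?_
      rwa [hv a, hv b]
    · intro h
      have := (p₂ (v a) (v b)).1 h
      rwa [hv a, hv b] at this
  rw [this]
  exact hx₀γ

noncomputable def hc : ZFSet → Cardinal.{1} :=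
  ZFSet.mem_wf.fix (C := fun _ => Cardinal.{1}) fun x ih => #x.toSet ⊔ ⨆ y : x.toSet, ih y.1 y.2

lemma hc_eq (x : ZFSet) : hc x = #x.toSet ⊔ ⨆ y : x.toSet, hc y.1 :=
  ZFSet.mem_wf.fix_eq _ x

lemma hered_of_hc_lt {θ : Cardinal.{1}} : ∀ x : ZFSet, hc x < θ → GM.Hered θ x := by
  intro x
  induction x using ZFSet.mem_wf.induction with
  | _ x IH =>
  intro h
  refine GM.Hered.intro x ?_ ?_
  · refine lt_of_le_of_lt ?_ h
    rw [hc_eq]; exact le_sup_left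
  · intro y hy
    refine IH y hy (lt_of_le_of_lt ?_ h)
    rw [hc_eq x]
    have hb : hc y ≤ ⨆ z : x.toSet, hc z.1 :=
      le_ciSup (f := fun z : x.toSet => hc z.1) (Cardinal.bddAbove_range _) ⟨y, hy⟩
    exact hb.trans le_sup_right

lemma hered_mem {θ : Cardinal.{1}} {x y : ZFSet} (hx : GM.Hered θ x) (h : y ∈ x.toSet) :
    GM.Hered θ y := by
  cases hx with
  | intro x hcard helem => exact helem y h

lemma hered_sub {θ : Cardinal.{1}} {x z : ZFSet} (hx : GM.Hered θ x) (h : z.toSet ⊆ x.toSet) :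
    GM.Hered θ z := by
  cases hx with
  | intro x hcard helem =>
    exact GM.Hered.intro z (lt_of_le_of_lt (Cardinal.mk_le_mk_of_subset h) hcard)
      (fun y hy => helem y (h hy))

end K


/-- `GMP(δ⁺, δ)` implies the failure of the weak Kurepa Hypothesis
at δ: every tree of height and size δ has at most δ cofinal branches. -/
theorem stmt8
    (δ : Cardinal.{1}) (hδ : δ.IsRegular)
    (hGMP : GM.GMP (Order.succ δ) δ) :
    ∀ T R Δ : ZFSet, GM.IsCardOrd Δ δ → GM.IsTreeOfHeight T R Δ →
      #T.toSet ≤ δ → #{b : ZFSet | GM.IsBranch T R Δ b} ≤ δ := by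
  intro T R Δ hΔ hTree hTcard
  obtain ⟨hΔord, hΔcard, hΔsmall⟩ := hΔ
  obtain ⟨-, -, hRtrans, -, hLevEx, -⟩ := hTree
  obtain ⟨θ₀, hθ₀⟩ := hGMP
  set μ := θ₀ ⊔ (K.hc T ⊔ δ) with hμ
  have hμinf : ℵ₀ ≤ μ := hδ.aleph0_le.trans (le_sup_of_le_right le_sup_right)
  set θ := Order.succ μ with hθ
  have hreg : θ.IsRegular := Cardinal.isRegular_succ hμinf
  have hTθ : GM.Hered θ T :=
    K.hered_of_hc_lt T (lt_of_le_of_lt (le_sup_of_le_right le_sup_left) (Order.lt_succ μ))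
  set P : ZFSet → ZFSet := fun t => ZFSet.sep (fun s => ZFSet.pair s t ∈ R) T with hP
  have hPmem : ∀ t z : ZFSet, z ∈ P t ↔ z ∈ T ∧ ZFSet.pair z t ∈ R := by
    intro t z
    simp only [hP]
    exact ZFSet.mem_sep
  set F : Finset ZFSet → Set ZFSet := fun s =>
    {z | GM.Hered θ z ∧ (z = T ∨ z ∈ T.toSet ∨ ∃ x ∈ s, ∃ t ∈ T.toSet, z = P t ∩ x)} with hF
  have hFcond : ∀ a : Finset ZFSet, F a ⊆ GM.HSet θ ∧ #(F a) < Order.succ δ := by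
    intro s
    refine ⟨fun z hz => hz.1, ?_⟩
    have hsub : F s ⊆
        insert T (T.toSet ∪ ⋃ x ∈ (↑s : Set ZFSet), (fun t => P t ∩ x) '' T.toSet) := by
      rintro z ⟨-, rfl | hzT | ⟨x, hxs, t, htT, rfl⟩⟩
      · exact Set.mem_insert _ _
      · exact Set.mem_insert_of_mem _ (Or.inl hzT)
      · exact Set.mem_insert_of_mem _
          (Or.inr (Set.mem_biUnion (Finset.mem_coe.2 hxs) ⟨t, htT, rfl⟩))
    have h1 : #(↑s : Set ZFSet) ≤ δ :=
      le_of_lt (lt_of_lt_of_le s.finite_toSet.lt_aleph0 hδ.aleph0_le)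
    have h2 : (⨆ x : (↑s : Set ZFSet), #((fun t => P t ∩ (x : ZFSet)) '' T.toSet)) ≤ δ :=
      ciSup_le' fun x => le_trans Cardinal.mk_image_le hTcard
    have h3 : #(⋃ x ∈ (↑s : Set ZFSet), (fun t => P t ∩ x) '' T.toSet) ≤ δ := by
      refine le_trans (Cardinal.mk_biUnion_le _ _) ?_
      calc #(↑s : Set ZFSet) * (⨆ x : (↑s : Set ZFSet), #((fun t => P t ∩ (x : ZFSet)) '' T.toSet))
          ≤ δ * δ := mul_le_mul' h1 h2
        _ = δ := Cardinal.mul_eq_self hδ.aleph0_le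
    have e1 : (1 : Cardinal.{1}) ≤ δ := le_of_lt (lt_of_lt_of_le Cardinal.one_lt_aleph0 hδ.aleph0_le)
    have h4 : #(F s) ≤ δ := by
      refine le_trans (Cardinal.mk_le_mk_of_subset hsub) ?_
      refine le_trans Cardinal.mk_insert_le ?_
      refine le_trans (add_le_add_left (Cardinal.mk_union_le _ _) 1) ?_
      calc #T.toSet + #(⋃ x ∈ (↑s : Set ZFSet), (fun t => P t ∩ x) '' T.toSet) + 1
          ≤ δ + δ + δ := add_le_add (add_le_add hTcard h3) e1
        _ = δ := by rw [Cardinal.add_eq_self hδ.aleph0_le, Cardinal.add_eq_self hδ.aleph0_le]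
    exact lt_of_le_of_lt h4 (Order.lt_succ δ)
  have hstat := hθ₀ θ (le_trans le_sup_left (le_of_lt (Order.lt_succ μ))) hreg
  obtain ⟨A, hAS, hAsub, hAcard, hclose⟩ := hstat F hFcond
  obtain ⟨-, hGuess, -, -⟩ := hAS
  have hTA : T ∈ A := hclose ∅ (by simp) ⟨hTθ, Or.inl rfl⟩
  have hTsub : T.toSet ⊆ A := fun u hu =>
    hclose ∅ (by simp) ⟨K.hered_mem hTθ hu, Or.inr (Or.inl hu)⟩
  have hPA : ∀ a, a ∈ A → ∀ t ∈ T.toSet, P t ∩ a ∈ A := by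
    intro a haA t htT
    have haθ : GM.Hered θ a := hAsub haA
    have hsub2 : (P t ∩ a).toSet ⊆ a.toSet := by
      intro z hz
      have h := Iff.rfl.1 hz
      exact Iff.rfl.2 (ZFSet.mem_inter.1 h).2
    refine hclose {a} (by simpa using haA)
      ⟨K.hered_sub haθ hsub2, Or.inr (Or.inr ⟨a, Finset.mem_singleton_self a, t, htT, rfl⟩)⟩
  have hBkey : ∀ b : ZFSet, GM.IsBranch T R Δ b → ∃ y, y ∈ A ∧ y.toSet ∩ A = b.toSet ∩ A := by
    intro b hb
    obtain ⟨hbT, hbchain, hbcof⟩ := hb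
    refine hGuess b ⟨T, hTA, hbT⟩ ?_
    intro a haA hacard
    set S : Set ZFSet :=
      {α | α ∈ Δ.toSet ∧ ∃ u, u ∈ a.toSet ∧ u ∈ T.toSet ∧ GM.HasLevel T R u α} with hS
    have hSlt : #S < δ := by
      have hex : ∃ f : S → a.toSet, Function.Injective f := by
        refine ⟨fun α => ⟨Classical.choose α.2.2, (Classical.choose_spec α.2.2).1⟩, ?_⟩
        intro α₁ α₂ h12
        have hu1 := Classical.choose_spec α₁.2.2
        have hu2 := Classical.choose_spec α₂.2.2
        have hcc : Classical.choose α₁.2.2 = Classical.choose α₂.2.2 := Subtype.ext_iff.1 h12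
        exact Subtype.ext (K.levelUnique hu1.2.2 (hcc.symm ▸ hu2.2.2))
      obtain ⟨f, hf⟩ := hex
      exact lt_of_le_of_lt (Cardinal.mk_le_of_injective hf) hacard
    have hbound : ∃ α', α' ∈ Δ.toSet ∧ ∀ α ∈ S, α ∈ α' := by
      by_contra hcon
      push_neg at hcon
      have hcov : Δ.toSet ⊆ ⋃ α ∈ S, (α.toSet ∪ {α}) := by
        intro β hβ
        obtain ⟨α, hαS, hnot⟩ := hcon β hβ
        have hαord : α.IsOrdinal := K.memOrd hΔord (Iff.rfl.1 hαS.1)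
        have hβord : β.IsOrdinal := K.memOrd hΔord (Iff.rfl.1 hβ)
        rcases K.tri α β hαord hβord with h | h | h
        · exact absurd h hnot
        · exact Set.mem_biUnion hαS (Set.mem_union_right _ (Set.mem_singleton_iff.2 h.symm))
        · exact Set.mem_biUnion hαS (Set.mem_union_left _ (Iff.rfl.2 h))
      have hle : δ ≤ #S * ⨆ α : S, #(((α : ZFSet).toSet ∪ {(α : ZFSet)} : Set ZFSet)) := by
        calc δ = #Δ.toSet := hΔcard.symm
          _ ≤ #(⋃ α ∈ S, (α.toSet ∪ {α})) := Cardinal.mk_le_mk_of_subset hcov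
          _ ≤ _ := Cardinal.mk_biUnion_le _ _
      have hsup : (⨆ α : S, #(((α : ZFSet).toSet ∪ {(α : ZFSet)} : Set ZFSet))) < δ := by
        refine Cardinal.iSup_lt_of_isRegular hδ hSlt ?_
        intro α
        refine lt_of_le_of_lt (Cardinal.mk_union_le _ _) ?_
        rw [Cardinal.mk_singleton]
        exact Cardinal.add_lt_of_lt hδ.aleph0_le (hΔsmall _ α.2.1)
          (lt_of_lt_of_le Cardinal.one_lt_aleph0 hδ.aleph0_le)
      exact absurd hle (not_le_of_gt (Cardinal.mul_lt_of_lt hδ.aleph0_le hSlt hsup))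
    obtain ⟨α', hα'Δ, hα'bnd⟩ := hbound
    obtain ⟨t, htb, htlev⟩ := hbcof α' hα'Δ
    have htT : t ∈ T.toSet := hbT htb
    have heq : b ∩ a = P t ∩ a := by
      apply ZFSet.ext
      intro z
      rw [ZFSet.mem_inter, ZFSet.mem_inter, hPmem t z]
      constructor
      · rintro ⟨hzb, hza⟩
        have hzT : z ∈ T.toSet := hbT (Iff.rfl.2 hzb)
        obtain ⟨αz, hαzΔ, hzlev⟩ := hLevEx z hzT
        have hαzS : αz ∈ S := ⟨hαzΔ, z, Iff.rfl.2 hza, hzT, hzlev⟩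
        have hαz : αz ∈ α' := hα'bnd αz hαzS
        rcases hbchain z (Iff.rfl.2 hzb) t htb with h | h | h
        · have hu := K.levelUnique (h ▸ hzlev) htlev
          exact absurd (hu ▸ hαz) (ZFSet.mem_irrefl α')
        · exact ⟨⟨Iff.rfl.1 hzT, h⟩, hza⟩
        · exact absurd (K.levelLT hRtrans htT h htlev hzlev) (ZFSet.mem_asymm hαz)
      · rintro ⟨⟨hzT', hzRt⟩, hza⟩
        have hzTset : z ∈ T.toSet := Iff.rfl.2 hzT'
        obtain ⟨αz, hαzΔ, hzlev⟩ := hLevEx z hzTset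
        have hlt : αz ∈ α' := K.levelLT hRtrans hzTset hzRt hzlev htlev
        obtain ⟨s', hs'b, hs'lev⟩ := hbcof αz hαzΔ
        have hs'T : s' ∈ T.toSet := hbT hs'b
        have hs'Rt : ZFSet.pair s' t ∈ R := by
          rcases hbchain s' hs'b t htb with h | h | h
          · exfalso
            have hu := K.levelUnique (h ▸ hs'lev) htlev
            exact absurd (hu ▸ hlt) (ZFSet.mem_irrefl _)
          · exact h
          · exact absurd (K.levelLT hRtrans htT h htlev hs'lev) (ZFSet.mem_asymm hlt)
        obtain ⟨hα'ord2, e₂, p₂⟩ := htlev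
        have hzPred : z ∈ GM.Pred T R t := ⟨hzTset, hzRt⟩
        have hs'Pred : s' ∈ GM.Pred T R t := ⟨hs'T, hs'Rt⟩
        set x : α'.toSet := e₂.symm ⟨z, hzPred⟩ with hx
        set x' : α'.toSet := e₂.symm ⟨s', hs'Pred⟩ with hx'
        have hα'ordZ : α'.IsOrdinal := K.memOrd hΔord (Iff.rfl.1 hα'Δ)
        have hxord : ((x : ZFSet)).IsOrdinal := K.memOrd hα'ordZ (Iff.rfl.1 x.2)
        have hx'ord : ((x' : ZFSet)).IsOrdinal := K.memOrd hα'ordZ (Iff.rfl.1 x'.2)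
        have hez : ((e₂ x : ZFSet)) = z := by rw [hx, Equiv.apply_symm_apply]
        have hez' : ((e₂ x' : ZFSet)) = s' := by rw [hx', Equiv.apply_symm_apply]
        have hzs' : z = s' := by
          rcases K.tri (x : ZFSet) (x' : ZFSet) hxord hx'ord with h | h | h
          · exfalso
            have hp := (p₂ x x').1 h
            rw [hez, hez'] at hp
            exact absurd (K.levelLT hRtrans hzTset hp hzlev hs'lev) (ZFSet.mem_irrefl αz)
          · have hxx : x = x' := Subtype.ext h
            rw [← hez, ← hez', hxx]
          · exfalso
            have hp := (p₂ x' x).1 h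
            rw [hez, hez'] at hp
            exact absurd (K.levelLT hRtrans hs'T hp hs'lev hzlev) (ZFSet.mem_irrefl αz)
        have hzb : z ∈ b.toSet := hzs'.symm ▸ hs'b
        exact ⟨Iff.rfl.1 hzb, hza⟩
    rw [heq]
    exact hPA a haA t htT
  set B := {b : ZFSet | GM.IsBranch T R Δ b} with hB
  have key : ∀ b : B, ∃ y, y ∈ A ∧ y.toSet ∩ A = (b : ZFSet).toSet ∩ A := fun b => hBkey b b.2
  set f : B → A := fun b => ⟨Classical.choose (key b), (Classical.choose_spec (key b)).1⟩ with hf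
  have hfinj : Function.Injective f := by
    intro b₁ b₂ h12
    have h1 := (Classical.choose_spec (key b₁)).2
    have h2 := (Classical.choose_spec (key b₂)).2
    have heq12 : Classical.choose (key b₁) = Classical.choose (key b₂) := Subtype.ext_iff.1 h12
    rw [heq12, h2] at h1
    have hsub1 : ((b₁ : ZFSet)).toSet ⊆ A := fun z hz => hTsub (b₁.2.1 hz)
    have hsub2 : ((b₂ : ZFSet)).toSet ⊆ A := fun z hz => hTsub (b₂.2.1 hz)
    rw [Set.inter_eq_left.2 hsub1, Set.inter_eq_left.2 hsub2] at h1
    exact Subtype.ext (SetLike.coe_injective h1.symm)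
  exact le_trans (Cardinal.mk_le_of_injective hfinj) (Order.lt_succ_iff.1 hAcard)
end

section
/- If GMP(δ, δ) holds, then δ has the tree property: there are no δ-Aronszajn trees. -/
open Cardinal

theorem ZFSet.mem_toSet_s10 (a u : ZFSet) : u ∈ a.toSet ↔ u ∈ a := Iff.rfl

namespace GMAux
open ZFSet GM

attribute [local instance] Classical.propDecidable

/-! ### von Neumann ordinal lemmas -/

theorem isOrdinal_of_trans {s : ZFSet} (h1 : s.IsTransitive)
    (h2 : ∀ w ∈ s, w.IsOrdinal) : s.IsOrdinal :=
  ⟨h1, fun hyz hzw hws => (h2 _ hws).isTransitive.mem_trans hyz hzw⟩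

theorem isOrdinal_mem {x y : ZFSet} (hx : x.IsOrdinal) (hy : y ∈ x) : y.IsOrdinal := by
  refine ⟨fun z hz w hw => hx.mem_trans' hw hz hy, fun {a b c} hab hbc hcy => ?_⟩
  have hcx : c ∈ x := hx.isTransitive.mem_trans hcy hy
  exact hx.mem_trans' hab hbc hcx

theorem tri : ∀ x : ZFSet, ∀ y : ZFSet, x.IsOrdinal → y.IsOrdinal →
    x ∈ y ∨ x = y ∨ y ∈ x := by
  intro x
  induction x using ZFSet.inductionOn with
  | _ x IHx =>
    intro y
    induction y using ZFSet.inductionOn with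
    | _ y IHy =>
      intro hx hy
      by_cases hxy : x ∈ y
      · exact Or.inl hxy
      by_cases hyx : y ∈ x
      · exact Or.inr (Or.inr hyx)
      refine Or.inr (Or.inl (ZFSet.ext fun a => ⟨fun ha => ?_, fun ha => ?_⟩))
      · rcases IHx a ha y (isOrdinal_mem hx ha) hy with h | h | h
        · exact h
        · exact absurd (h ▸ ha) hyx
        · exact absurd (hx.mem_trans h ha) hyx
      · rcases IHy a ha hx (isOrdinal_mem hy ha) with h | h | h
        · exact absurd (hy.mem_trans h ha) hxy
        · exact absurd (h ▸ ha) hxy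
        · exact h

theorem mem_of_subset_ne {x y : ZFSet} (hx : x.IsOrdinal) (hy : y.IsOrdinal)
    (hsub : x.toSet ⊆ y.toSet) (hne : x ≠ y) : x ∈ y := by
  rcases tri x y hx hy with h | h | h
  · exact h
  · exact absurd h hne
  · exact absurd (hsub h) (ZFSet.mem_irrefl y)

theorem isOrdinal_insert {x : ZFSet} (hx : x.IsOrdinal) : (insert x x : ZFSet).IsOrdinal := by
  refine isOrdinal_of_trans (fun y hy => ?_) (fun w hw => ?_)
  · rcases ZFSet.mem_insert_iff.1 hy with rfl | hy
    · exact fun z hz => ZFSet.mem_insert_of_mem _ hz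
    · exact fun z hz => ZFSet.mem_insert_of_mem _ (hx.isTransitive.mem_trans hz hy)
  · rcases ZFSet.mem_insert_iff.1 hw with rfl | hw
    · exact hx
    · exact isOrdinal_mem hx hw

/-- Rigidity: an ∈-isomorphism between von Neumann ordinals forces equality. -/
theorem rigid : ∀ x : ZFSet, ∀ y : ZFSet, x.IsOrdinal → y.IsOrdinal →
    ∀ e : x.toSet ≃ y.toSet,
      (∀ a b : x.toSet, (a : ZFSet) ∈ (b : ZFSet) ↔ ((e a : ZFSet) ∈ (e b : ZFSet))) →
      x = y := by
  intro x
  induction x using ZFSet.inductionOn with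
  | _ x IH =>
    intro y hx hy e he
    have claim : ∀ a : x.toSet, ((e a : ZFSet)) = (a : ZFSet) := by
      intro a
      have hsubx : (a : ZFSet).toSet ⊆ x.toSet := fun w hw =>
        hx.isTransitive.mem_trans hw a.2
      have hsuby : ((e a : ZFSet)).toSet ⊆ y.toSet := fun w hw =>
        hy.isTransitive.mem_trans hw (e a).2
      have hfwd : ∀ w : (a : ZFSet).toSet, ((e ⟨w, hsubx w.2⟩ : ZFSet)) ∈ (e a : ZFSet) :=
        fun w => (he ⟨w, hsubx w.2⟩ a).1 w.2
      have hbwd : ∀ v : ((e a : ZFSet)).toSet,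
          ((e.symm ⟨v, hsuby v.2⟩ : ZFSet)) ∈ (a : ZFSet) := by
        intro v
        have := (he (e.symm ⟨v, hsuby v.2⟩) a).2
        simp only [Equiv.apply_symm_apply] at this
        exact this v.2
      let e' : (a : ZFSet).toSet ≃ ((e a : ZFSet)).toSet :=
        { toFun := fun w => ⟨e ⟨w, hsubx w.2⟩, hfwd w⟩
          invFun := fun v => ⟨e.symm ⟨v, hsuby v.2⟩, hbwd v⟩
          left_inv := by
            intro w
            apply Subtype.ext
            have : (⟨(e ⟨(w : ZFSet), hsubx w.2⟩ : ZFSet), hsuby (hfwd w)⟩ : y.toSet)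
                = e ⟨w, hsubx w.2⟩ := Subtype.ext rfl
            simp only [this, Equiv.symm_apply_apply]
          right_inv := by
            intro v
            apply Subtype.ext
            have : (⟨((e.symm ⟨(v : ZFSet), hsuby v.2⟩ : x.toSet) : ZFSet), hsubx (hbwd v)⟩
                : x.toSet) = e.symm ⟨v, hsuby v.2⟩ := Subtype.ext rfl
            simp only [this, Equiv.apply_symm_apply] }
      have he' : ∀ u w : (a : ZFSet).toSet,
          (u : ZFSet) ∈ (w : ZFSet) ↔ ((e' u : ZFSet) ∈ (e' w : ZFSet)) :=
        fun u w => he ⟨u, hsubx u.2⟩ ⟨w, hsubx w.2⟩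
      exact (IH a a.2 (e a) (isOrdinal_mem hx a.2) (isOrdinal_mem hy (e a).2) e' he').symm
    apply ZFSet.ext
    intro z
    constructor
    · intro hz
      have h := claim ⟨z, hz⟩
      have := (e ⟨z, hz⟩).2
      rwa [h] at this
    · intro hz
      have h1 : e (e.symm ⟨z, hz⟩) = ⟨z, hz⟩ := Equiv.apply_symm_apply _ _
      have h2 := claim (e.symm ⟨z, hz⟩)
      rw [h1] at h2
      have := (e.symm ⟨z, hz⟩).2
      rwa [← h2] at this

/-! ### Hereditary smallness lemmas -/

theorem hered_mono {θ θ' : Cardinal.{1}} (h : θ ≤ θ') {x : ZFSet} (hx : Hered θ x) :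
    Hered θ' x := by
  induction hx with
  | intro x h1 _ IH => exact Hered.intro x (h1.trans_le h) IH

theorem hered_of_mem {θ : Cardinal.{1}} {x y : ZFSet} (hx : Hered θ x) (hy : y ∈ x.toSet) :
    Hered θ y := by
  cases hx with
  | intro x h1 h2 => exact h2 y hy

theorem hered_of_subset {θ : Cardinal.{1}} {x z : ZFSet} (hx : Hered θ x)
    (hsub : z.toSet ⊆ x.toSet) : Hered θ z := by
  cases hx with
  | intro x h1 h2 =>
    exact Hered.intro z ((Cardinal.mk_le_mk_of_subset hsub).trans_lt h1)
      (fun y hy => h2 y (hsub hy))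

theorem hered_exists : ∀ x : ZFSet, ∃ c : Cardinal.{1}, Hered c x := by
  intro x
  induction x using ZFSet.inductionOn with
  | _ x IH =>
    classical
    choose f hf using fun (y : x.toSet) => IH y y.2
    refine ⟨Order.succ (#x.toSet ⊔ ⨆ y : x.toSet, f y), Hered.intro x ?_ fun y hy => ?_⟩
    · exact lt_of_le_of_lt le_sup_left (Order.lt_succ _)
    · refine hered_mono ?_ (hf ⟨y, hy⟩)
      exact le_of_lt (lt_of_le_of_lt
        (le_trans (le_ciSup (Cardinal.bddAbove_range _) (⟨y, hy⟩ : x.toSet)) le_sup_right)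
        (Order.lt_succ _))

theorem hered_empty {θ : Cardinal.{1}} (hθ : 0 < θ) : Hered θ (∅ : ZFSet) := by
  refine Hered.intro ∅ ?_ (fun y hy => absurd hy (by simp [ZFSet.mem_toSet_s10]))
  have : (∅ : ZFSet).toSet = (∅ : Set ZFSet) := by
    ext u; simp [ZFSet.mem_toSet_s10]
  rw [this]
  simpa using hθ

/-! ### smallness helpers -/

theorem small_biUnion {δ : Cardinal.{1}} (hδ : δ.IsRegular) {s : Set ZFSet}
    (hs : #s < δ) (g : ZFSet → Set ZFSet) (hg : ∀ z ∈ s, #(g z) < δ) :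
    #(⋃ z ∈ s, g z) < δ := by
  have h1 : (⋃ z ∈ s, g z) = ⋃ z : s, g z := by
    simp [Set.iUnion_coe_set]
  rw [h1]
  refine lt_of_le_of_lt (Cardinal.mk_iUnion_le _) ?_
  exact Cardinal.mul_lt_of_lt hδ.aleph0_le hs
    (Cardinal.iSup_lt_of_isRegular hδ hs fun i => hg i i.2)

theorem small_union {δ : Cardinal.{1}} (hδ : δ.IsRegular) {s u : Set ZFSet}
    (hs : #s < δ) (hu : #u < δ) : #(s ∪ u : Set ZFSet) < δ :=
  lt_of_le_of_lt (Cardinal.mk_union_le _ _) (Cardinal.add_lt_of_lt hδ.aleph0_le hs hu)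

theorem small_singleton {δ : Cardinal.{1}} (hδ : δ.IsRegular) (z : ZFSet) :
    #({z} : Set ZFSet) < δ := by
  rw [Cardinal.mk_singleton]
  exact lt_of_lt_of_le Cardinal.one_lt_aleph0 hδ.aleph0_le

theorem small_finite {δ : Cardinal.{1}} (hδ : δ.IsRegular) {s : Set ZFSet}
    (hs : s.Finite) : #s < δ :=
  lt_of_lt_of_le hs.lt_aleph0 hδ.aleph0_le

/-! ### level lemmas -/

theorem levelOfPred {T R t α : ZFSet} (hα : α.IsOrdinal)
    (htrans : ∀ s u v : ZFSet, ZFSet.pair s u ∈ R → ZFSet.pair u v ∈ R → ZFSet.pair s v ∈ R)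
    (e : α.toSet ≃ GM.Pred T R t)
    (he : ∀ a b : α.toSet,
      (a : ZFSet) ∈ (b : ZFSet) ↔ ZFSet.pair (e a : ZFSet) (e b : ZFSet) ∈ R)
    (γ : α.toSet) : GM.HasLevel T R (e γ : ZFSet) (γ : ZFSet) := by
  have hsub : (γ : ZFSet).toSet ⊆ α.toSet := fun w hw =>
    hα.isTransitive.mem_trans hw γ.2
  have hfwd : ∀ w : (γ : ZFSet).toSet,
      ((e ⟨w, hsub w.2⟩ : ZFSet)) ∈ GM.Pred T R (e γ : ZFSet) := by
    intro w
    exact ⟨(e ⟨w, hsub w.2⟩).2.1, (he ⟨w, hsub w.2⟩ γ).1 w.2⟩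
  have hmemPt : ∀ v : GM.Pred T R (e γ : ZFSet), (v : ZFSet) ∈ GM.Pred T R t := by
    intro v
    exact ⟨v.2.1, htrans _ _ _ v.2.2 (e γ).2.2⟩
  have hbwd : ∀ v : GM.Pred T R (e γ : ZFSet),
      ((e.symm ⟨v, hmemPt v⟩ : ZFSet)) ∈ ((γ : ZFSet)).toSet := by
    intro v
    have h := (he (e.symm ⟨v, hmemPt v⟩) γ).2
    simp only [Equiv.apply_symm_apply] at h
    exact h v.2.2
  refine ⟨isOrdinal_mem hα γ.2, ⟨?_, ?_⟩⟩
  · exact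
    { toFun := fun w => ⟨e ⟨w, hsub w.2⟩, hfwd w⟩
      invFun := fun v => ⟨e.symm ⟨v, hmemPt v⟩, hbwd v⟩
      left_inv := by
        intro w
        apply Subtype.ext
        have h : (⟨(e ⟨(w : ZFSet), hsub w.2⟩ : ZFSet), hmemPt ⟨_, hfwd w⟩⟩ : GM.Pred T R t)
            = e ⟨w, hsub w.2⟩ := Subtype.ext rfl
        simp only [h, Equiv.symm_apply_apply]
      right_inv := by
        intro v
        apply Subtype.ext
        have h : (⟨((e.symm ⟨(v : ZFSet), hmemPt v⟩ : α.toSet) : ZFSet), hsub (hbwd v)⟩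
            : α.toSet) = e.symm ⟨v, hmemPt v⟩ := Subtype.ext rfl
        simp only [h, Equiv.apply_symm_apply] }
  · intro a b
    exact he ⟨a, hsub a.2⟩ ⟨b, hsub b.2⟩

theorem levelUnique {T R u β β' : ZFSet} (h1 : GM.HasLevel T R u β)
    (h2 : GM.HasLevel T R u β') : β = β' := by
  obtain ⟨hβ, e1, p1⟩ := h1
  obtain ⟨hβ', e2, p2⟩ := h2
  refine rigid β β' hβ hβ' (e1.trans e2.symm) ?_
  intro a b
  rw [p1 a b]
  have h := p2 (e2.symm (e1 a)) (e2.symm (e1 b))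
  simp only [Equiv.apply_symm_apply] at h
  exact h.symm.trans Iff.rfl

/-! ### bounded sups of ordinals below Δ -/

/-- the downward closure in `Δ` of the set of `β ∈ Δ` with `P β`. -/
noncomputable def dsup (Δ : ZFSet) (P : ZFSet → Prop) : ZFSet :=
  ZFSet.sep (fun ξ => ∃ β : ZFSet, β ∈ Δ.toSet ∧ P β ∧ (ξ ∈ β ∨ ξ = β)) Δ

theorem mem_dsup {Δ : ZFSet} {P : ZFSet → Prop} {ξ : ZFSet} :
    ξ ∈ dsup Δ P ↔ ξ ∈ Δ ∧ ∃ β : ZFSet, β ∈ Δ.toSet ∧ P β ∧ (ξ ∈ β ∨ ξ = β) :=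
  ZFSet.mem_sep

theorem dsup_sub {Δ : ZFSet} {P : ZFSet → Prop} : (dsup Δ P).toSet ⊆ Δ.toSet := by
  intro ξ hξ
  rw [ZFSet.mem_toSet_s10] at hξ ⊢
  exact (mem_dsup.1 hξ).1

theorem dsup_ord {Δ : ZFSet} (hΔ : Δ.IsOrdinal) (P : ZFSet → Prop) :
    (dsup Δ P).IsOrdinal := by
  refine isOrdinal_of_trans (fun ξ hξ η hη => ?_) (fun w hw => ?_)
  · obtain ⟨hξΔ, β, hβΔ, hPβ, hle⟩ := mem_dsup.1 hξ
    refine mem_dsup.2 ⟨hΔ.isTransitive.mem_trans hη hξΔ, β, hβΔ, hPβ, Or.inl ?_⟩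
    have hβord : β.IsOrdinal := isOrdinal_mem hΔ ((ZFSet.mem_toSet_s10 _ _).1 hβΔ)
    rcases hle with h | rfl
    · exact hβord.isTransitive.mem_trans hη h
    · exact hη
  · exact isOrdinal_mem hΔ ((ZFSet.mem_toSet_s10 _ _).1 (dsup_sub ((ZFSet.mem_toSet_s10 _ _).2 hw)))

theorem dsup_card {Δ : ZFSet} {δ : Cardinal.{1}} (hδ : δ.IsRegular)
    (hsize : ∀ β ∈ Δ.toSet, #β.toSet < δ) (P : ZFSet → Prop)
    (hP : #{β : ZFSet | β ∈ Δ.toSet ∧ P β} < δ) : #(dsup Δ P).toSet < δ := by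
  have hsub : (dsup Δ P).toSet ⊆
      ⋃ β ∈ {β : ZFSet | β ∈ Δ.toSet ∧ P β}, ((β : ZFSet).toSet ∪ {β}) := by
    intro ξ hξ
    rw [ZFSet.mem_toSet_s10] at hξ
    obtain ⟨_, β, hβΔ, hPβ, hle⟩ := mem_dsup.1 hξ
    refine Set.mem_biUnion ⟨hβΔ, hPβ⟩ ?_
    rcases hle with h | rfl
    · exact Or.inl ((ZFSet.mem_toSet_s10 _ _).2 h)
    · exact Or.inr rfl
  refine lt_of_le_of_lt (Cardinal.mk_le_mk_of_subset hsub) ?_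
  refine small_biUnion hδ hP _ (fun β hβ => ?_)
  exact small_union hδ (hsize β hβ.1) (small_singleton hδ β)

/-! ### the closure function -/

noncomputable def predZ (T R s : ZFSet) : ZFSet :=
  ZFSet.sep (fun u => ZFSet.pair u s ∈ R) T

theorem mem_predZ {T R s u : ZFSet} : u ∈ predZ T R s ↔ u ∈ T ∧ ZFSet.pair u s ∈ R :=
  ZFSet.mem_sep

theorem predZ_toSet (T R s : ZFSet) : (predZ T R s).toSet = GM.Pred T R s := by
  ext u
  simp only [GM.Pred, ZFSet.mem_toSet_s10, Set.mem_setOf_eq, mem_predZ]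

def levelSet (T R β : ZFSet) : Set ZFSet := {u | u ∈ T.toSet ∧ GM.HasLevel T R u β}

noncomputable def w1 (T y : ZFSet) : Set ZFSet :=
  if h : ∃ u : ZFSet, u ∈ y.toSet ∧ u ∉ T.toSet then {h.choose} else ∅

noncomputable def w2 (R y : ZFSet) : Set ZFSet :=
  if h : ∃ u v : ZFSet, u ∈ y.toSet ∧ v ∈ y.toSet ∧
      ¬(u = v ∨ ZFSet.pair u v ∈ R ∨ ZFSet.pair v u ∈ R) then
    {h.choose, h.choose_spec.choose} else ∅

noncomputable def w3 (T R Δ y : ZFSet) : Set ZFSet :=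
  if h : ∃ β : ZFSet, β ∈ Δ.toSet ∧ ∀ u ∈ y.toSet, ¬ GM.HasLevel T R u β then
    {h.choose} else ∅

theorem w1_sub {T y : ZFSet} : w1 T y ⊆ y.toSet := by
  unfold w1; split
  · next h => intro u hu; rw [Set.mem_singleton_iff] at hu; exact hu ▸ h.choose_spec.1
  · exact Set.empty_subset _

theorem w2_sub {R y : ZFSet} : w2 R y ⊆ y.toSet := by
  unfold w2; split
  · next h =>
      intro u hu
      rcases hu with rfl | hu
      · exact h.choose_spec.choose_spec.1
      · rw [Set.mem_singleton_iff] at hu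
        exact hu ▸ h.choose_spec.choose_spec.2.1
  · exact Set.empty_subset _

theorem w3_sub {T R Δ y : ZFSet} : w3 T R Δ y ⊆ Δ.toSet := by
  unfold w3; split
  · next h => intro u hu; rw [Set.mem_singleton_iff] at hu; exact hu ▸ h.choose_spec.1
  · exact Set.empty_subset _

theorem w1_finite {T y : ZFSet} : (w1 T y).Finite := by
  unfold w1; split
  · exact Set.finite_singleton _
  · exact Set.finite_empty

theorem w2_finite {R y : ZFSet} : (w2 R y).Finite := by
  unfold w2; split
  · exact (Set.finite_singleton _).insert _
  · exact Set.finite_empty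

theorem w3_finite {T R Δ y : ZFSet} : (w3 T R Δ y).Finite := by
  unfold w3; split
  · exact Set.finite_singleton _
  · exact Set.finite_empty

theorem w1_spec {T y : ZFSet} (h : ¬ y.toSet ⊆ T.toSet) :
    ∃ u ∈ w1 T y, u ∈ y.toSet ∧ u ∉ T.toSet := by
  obtain ⟨u, hu1, hu2⟩ := Set.not_subset.1 h
  have hex : ∃ u : ZFSet, u ∈ y.toSet ∧ u ∉ T.toSet := ⟨u, hu1, hu2⟩
  refine ⟨hex.choose, ?_, hex.choose_spec⟩
  unfold w1; rw [dif_pos hex]; rfl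

theorem w2_spec {R y : ZFSet}
    (hex : ∃ u v : ZFSet, u ∈ y.toSet ∧ v ∈ y.toSet ∧
      ¬(u = v ∨ ZFSet.pair u v ∈ R ∨ ZFSet.pair v u ∈ R)) :
    ∃ u ∈ w2 R y, ∃ v ∈ w2 R y, u ∈ y.toSet ∧ v ∈ y.toSet ∧
      ¬(u = v ∨ ZFSet.pair u v ∈ R ∨ ZFSet.pair v u ∈ R) := by
  refine ⟨hex.choose, ?_, hex.choose_spec.choose, ?_, hex.choose_spec.choose_spec⟩
  · unfold w2; rw [dif_pos hex]; exact Or.inl rfl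
  · unfold w2; rw [dif_pos hex]; exact Or.inr rfl

theorem w3_spec {T R Δ y : ZFSet}
    (hex : ∃ β : ZFSet, β ∈ Δ.toSet ∧ ∀ u ∈ y.toSet, ¬ GM.HasLevel T R u β) :
    ∃ β ∈ w3 T R Δ y, β ∈ Δ.toSet ∧ ∀ u ∈ y.toSet, ¬ GM.HasLevel T R u β := by
  refine ⟨hex.choose, ?_, hex.choose_spec⟩
  unfold w3; rw [dif_pos hex]; rfl

/-- The closure (Skolem) function used with stationarity. -/
noncomputable def FF (T R Δ : ZFSet) (δ θ : Cardinal.{1}) (a : Finset ZFSet) : Set ZFSet :=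
  {T, R, Δ, (∅ : ZFSet)} ∪
  (⋃ z ∈ (↑a : Set ZFSet),
    ((if z ∈ Δ.toSet then levelSet T R z ∪ {(insert z z : ZFSet)} else ∅) ∪
     (if GM.Hered θ z ∧ #z.toSet < δ then z.toSet else ∅) ∪
     ({dsup Δ (fun β => ∃ u : ZFSet, u ∈ z.toSet ∧ u ∈ T.toSet ∧ GM.HasLevel T R u β)} :
        Set ZFSet) ∪
     (if GM.Hered θ z then w1 T z ∪ w2 R z ∪ w3 T R Δ z else ∅))) ∪
  (⋃ z ∈ (↑a : Set ZFSet), ⋃ w ∈ (↑a : Set ZFSet), {predZ T R z ∩ w})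

section FFlemmas

variable {T R Δ : ZFSet} {δ θ : Cardinal.{1}} {a : Finset ZFSet}

theorem mem_FF_base : T ∈ FF T R Δ δ θ a ∧ R ∈ FF T R Δ δ θ a ∧ Δ ∈ FF T R Δ δ θ a ∧
    (∅ : ZFSet) ∈ FF T R Δ δ θ a := by
  refine ⟨Or.inl (Or.inl ?_), Or.inl (Or.inl ?_), Or.inl (Or.inl ?_), Or.inl (Or.inl ?_)⟩
  · simp
  · simp
  · simp
  · simp

theorem mem_FF_G1 {z : ZFSet} (hz : z ∈ a) {u : ZFSet}
    (hu : u ∈ ((if z ∈ Δ.toSet then levelSet T R z ∪ {(insert z z : ZFSet)} else ∅) ∪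
     (if GM.Hered θ z ∧ #z.toSet < δ then z.toSet else ∅) ∪
     ({dsup Δ (fun β => ∃ u : ZFSet, u ∈ z.toSet ∧ u ∈ T.toSet ∧ GM.HasLevel T R u β)} :
        Set ZFSet) ∪
     (if GM.Hered θ z then w1 T z ∪ w2 R z ∪ w3 T R Δ z else ∅))) :
    u ∈ FF T R Δ δ θ a :=
  Or.inl (Or.inr (Set.mem_biUnion (Finset.mem_coe.2 hz) hu))

theorem mem_FF_inter {z w : ZFSet} (hz : z ∈ a) (hw : w ∈ a) :
    predZ T R z ∩ w ∈ FF T R Δ δ θ a :=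
  Or.inr (Set.mem_biUnion (Finset.mem_coe.2 hz)
    (Set.mem_biUnion (Finset.mem_coe.2 hw) rfl))

end FFlemmas

end GMAux

/-- `GMP(δ, δ)` implies the tree property at δ. -/
theorem stmt10
    (δ : Cardinal.{1}) (hδ : δ.IsRegular) (hGMP : GM.GMP δ δ) :
    ∀ T R Δ : ZFSet, GM.IsCardOrd Δ δ → GM.IsTreeOfHeight T R Δ →
      GM.SlimTree T R Δ δ → ∃ b : ZFSet, GM.IsBranch T R Δ b := by
  intro T R Δ hΔ htree hslim
  classical
  obtain ⟨θ₀, hG⟩ := hGMP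
  obtain ⟨cT, hcT⟩ := GMAux.hered_exists T
  obtain ⟨cR, hcR⟩ := GMAux.hered_exists R
  obtain ⟨cΔ, hcΔ⟩ := GMAux.hered_exists Δ
  set base : Cardinal.{1} := θ₀ ⊔ cT ⊔ cR ⊔ cΔ ⊔ δ with hbase
  set θ : Cardinal.{1} := Order.succ base with hθdef
  have hbase0 : ℵ₀ ≤ base := hδ.aleph0_le.trans le_sup_right
  have hθreg : θ.IsRegular := Cardinal.isRegular_succ hbase0
  have hle : ∀ c : Cardinal.{1}, c ≤ base → c ≤ θ := fun c hc => hc.trans (Order.le_succ _)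
  have hHT : GM.Hered θ T := GMAux.hered_mono
    (hle _ (le_sup_of_le_left (le_sup_of_le_left (le_sup_of_le_left le_sup_right)))) hcT
  have hHR : GM.Hered θ R := GMAux.hered_mono
    (hle _ (le_sup_of_le_left (le_sup_of_le_left le_sup_right))) hcR
  have hHΔ : GM.Hered θ Δ := GMAux.hered_mono (hle _ (le_sup_of_le_left le_sup_right)) hcΔ
  have hθ₀θ : θ₀ ≤ θ :=
    hle _ (le_sup_of_le_left (le_sup_of_le_left (le_sup_of_le_left le_sup_left)))
  have hδθ : δ < θ := lt_of_le_of_lt le_sup_right (Order.lt_succ base)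
  have hstat := hG θ hθ₀θ hθreg
  set F := GMAux.FF T R Δ δ θ with hFdef
  have hθpos : (0 : Cardinal.{1}) < θ := hθreg.pos
  have hΔord := hΔ.1
  have hΔcard := hΔ.2.1
  have hΔsize := hΔ.2.2
  have hsubΔins : ∀ z : ZFSet, z ∈ Δ.toSet → (insert z z : ZFSet).toSet ⊆ Δ.toSet := by
    intro z hz u hu
    rw [ZFSet.mem_toSet_s10] at hu ⊢
    rcases ZFSet.mem_insert_iff.1 hu with rfl | hu
    · exact (ZFSet.mem_toSet_s10 _ _).1 hz
    · exact hΔord.isTransitive.mem_trans hu ((ZFSet.mem_toSet_s10 _ _).1 hz)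
  have hFprop : ∀ a : Finset ZFSet, F a ⊆ GM.HSet θ ∧ #(F a) < δ := by
    intro a
    constructor
    · intro u hu
      show GM.Hered θ u
      rcases hu with (h | h) | h
      · rcases h with rfl | h
        · exact hHT
        rcases h with rfl | h
        · exact hHR
        rcases h with rfl | h
        · exact hHΔ
        rw [Set.mem_singleton_iff] at h
        exact h ▸ GMAux.hered_empty hθpos
      · obtain ⟨z, _, hu⟩ := Set.mem_iUnion₂.1 h
        rcases hu with ((h1 | h2) | h3) | h4
        · by_cases hzΔ : z ∈ Δ.toSet
          · rw [if_pos hzΔ] at h1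
            rcases h1 with h1 | h1
            · exact GMAux.hered_of_mem hHT h1.1
            · rw [Set.mem_singleton_iff] at h1
              exact h1 ▸ GMAux.hered_of_subset hHΔ (hsubΔins z hzΔ)
          · rw [if_neg hzΔ] at h1
            exact absurd h1 (Set.notMem_empty u)
        · by_cases hzH : GM.Hered θ z ∧ #z.toSet < δ
          · rw [if_pos hzH] at h2
            exact GMAux.hered_of_mem hzH.1 h2
          · rw [if_neg hzH] at h2
            exact absurd h2 (Set.notMem_empty u)
        · rw [Set.mem_singleton_iff] at h3
          exact h3 ▸ GMAux.hered_of_subset hHΔ GMAux.dsup_sub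
        · by_cases hzH : GM.Hered θ z
          · rw [if_pos hzH] at h4
            rcases h4 with (h4 | h4) | h4
            · exact GMAux.hered_of_mem hzH (GMAux.w1_sub h4)
            · exact GMAux.hered_of_mem hzH (GMAux.w2_sub h4)
            · exact GMAux.hered_of_mem hHΔ (GMAux.w3_sub h4)
          · rw [if_neg hzH] at h4
            exact absurd h4 (Set.notMem_empty u)
      · obtain ⟨z, _, hu⟩ := Set.mem_iUnion₂.1 h
        obtain ⟨w, _, hu⟩ := Set.mem_iUnion₂.1 hu
        rw [Set.mem_singleton_iff] at hu
        subst hu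
        refine GMAux.hered_of_subset hHT ?_
        intro v hv
        rw [ZFSet.mem_toSet_s10] at hv ⊢
        exact GMAux.mem_predZ.1 (ZFSet.mem_inter.1 hv).1 |>.1
    · have hempty : #(∅ : Set ZFSet) < δ := by
        rw [Cardinal.mk_emptyCollection]
        exact hδ.pos
      refine GMAux.small_union hδ (GMAux.small_union hδ ?_ ?_) ?_
      · exact GMAux.small_finite hδ (Set.toFinite _)
      · refine GMAux.small_biUnion hδ (GMAux.small_finite hδ a.finite_toSet) _ ?_
        intro z _
        refine GMAux.small_union hδ (GMAux.small_union hδ (GMAux.small_union hδ ?_ ?_) ?_) ?_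
        · split
          · next hzΔ => exact GMAux.small_union hδ (hslim z hzΔ) (GMAux.small_singleton hδ _)
          · exact hempty
        · split
          · next hzH => exact hzH.2
          · exact hempty
        · exact GMAux.small_singleton hδ _
        · split
          · exact GMAux.small_finite hδ
              ((GMAux.w1_finite.union GMAux.w2_finite).union GMAux.w3_finite)
          · exact hempty
      · refine GMAux.small_biUnion hδ (GMAux.small_finite hδ a.finite_toSet) _ ?_
        intro z _
        refine GMAux.small_biUnion hδ (GMAux.small_finite hδ a.finite_toSet) _ ?_
        intro w _
        exact GMAux.small_singleton hδ _
  obtain ⟨A, hAS, hAX, hAcard, hAcl⟩ := hstat F hFprop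
  obtain ⟨-, hGuess, -, -⟩ := hAS
  have hclT : T ∈ A := hAcl ∅ (by simp) GMAux.mem_FF_base.1
  have hcl0 : (∅ : ZFSet) ∈ A := hAcl ∅ (by simp) GMAux.mem_FF_base.2.2.2
  have hcl1 : ∀ z ∈ A, ∀ u ∈ F {z}, u ∈ A := fun z hz u hu =>
    hAcl {z} (by simp [hz]) hu
  have hcl2 : ∀ z ∈ A, ∀ w ∈ A, ∀ u ∈ F {z, w}, u ∈ A := fun z hz w hw u hu =>
    hAcl {z, w} (by
      simp only [Finset.coe_insert, Finset.coe_singleton]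
      exact Set.insert_subset_iff.2 ⟨hz, Set.singleton_subset_iff.2 hw⟩) hu
  have honelt : (1 : Cardinal.{1}) < δ := lt_of_lt_of_le Cardinal.one_lt_aleph0 hδ.aleph0_le
  have hsuccΔ : ∀ β, β ∈ Δ.toSet → (insert β β : ZFSet) ∈ Δ.toSet := by
    intro β hβ
    have hβZ : β ∈ Δ := (ZFSet.mem_toSet_s10 _ _).1 hβ
    have hβord : β.IsOrdinal := GMAux.isOrdinal_mem hΔord hβZ
    have hsub : (insert β β : ZFSet).toSet ⊆ Δ.toSet := by
      intro u hu
      rw [ZFSet.mem_toSet_s10] at hu ⊢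
      rcases ZFSet.mem_insert_iff.1 hu with rfl | hu
      · exact hβZ
      · exact hΔord.isTransitive.mem_trans hu hβZ
    have h1 : (insert β β : ZFSet).toSet = insert β β.toSet := by
      ext u
      simp [ZFSet.mem_toSet_s10, ZFSet.mem_insert_iff]
    have hcardins : #(insert β β : ZFSet).toSet < δ := by
      rw [h1]
      exact lt_of_le_of_lt (Cardinal.mk_insert_le)
        (Cardinal.add_lt_of_lt hδ.aleph0_le (hΔsize β hβ) honelt)
    have hne : (insert β β : ZFSet) ≠ Δ := by
      intro h
      rw [h, hΔcard] at hcardins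
      exact lt_irrefl δ hcardins
    exact (ZFSet.mem_toSet_s10 _ _).2
      (GMAux.mem_of_subset_ne (GMAux.isOrdinal_insert hβord) hΔord hsub hne)
  set α := GMAux.dsup Δ (· ∈ A) with hαdef
  have hαord : α.IsOrdinal := GMAux.dsup_ord hΔord _
  have hαsub : α.toSet ⊆ Δ.toSet := GMAux.dsup_sub
  have hkey : ∀ β : ZFSet, β ∈ Δ.toSet → β ∈ A → β ∈ α.toSet := by
    intro β hβ hβA
    have hins : (insert β β : ZFSet) ∈ A := by
      refine hcl1 β hβA _ (GMAux.mem_FF_G1 (z := β) (Finset.mem_singleton_self β) ?_)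
      exact Or.inl (Or.inl (Or.inl (by rw [if_pos hβ]; exact Or.inr rfl)))
    rw [ZFSet.mem_toSet_s10]
    exact GMAux.mem_dsup.2 ⟨(ZFSet.mem_toSet_s10 _ _).1 hβ, insert β β, hsuccΔ β hβ, hins,
      Or.inl (ZFSet.mem_insert β β)⟩
  have hαcard : #α.toSet < δ := by
    refine GMAux.dsup_card hδ hΔsize _ ?_
    exact lt_of_le_of_lt (Cardinal.mk_le_mk_of_subset (fun β hβ => hβ.2)) hAcard
  have hαmem : α ∈ Δ.toSet := by
    have hne : α ≠ Δ := by
      intro h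
      rw [h, hΔcard] at hαcard
      exact lt_irrefl δ hαcard
    exact (ZFSet.mem_toSet_s10 _ _).2 (GMAux.mem_of_subset_ne hαord hΔord hαsub hne)
  obtain ⟨t, htT, hlevt⟩ := htree.2.2.2.2.2 α hαmem
  obtain ⟨e, he⟩ := hlevt.2
  set x := GMAux.predZ T R t with hxdef
  have hxPred : x.toSet = GM.Pred T R t := GMAux.predZ_toSet T R t
  have htrans := htree.2.2.1
  have hBounded : GM.Bounded x A := ⟨T, hclT, by
    rw [hxPred]; exact fun u hu => hu.1⟩
  have hApprox : GM.Approx δ x A := by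
    intro a haA hacard
    set P : ZFSet → Prop :=
      fun β => ∃ u : ZFSet, u ∈ a.toSet ∧ u ∈ T.toSet ∧ GM.HasLevel T R u β with hPdef
    set sa := GMAux.dsup Δ P with hsadef
    have hsaA : sa ∈ A := hcl1 a haA _ (GMAux.mem_FF_G1 (z := a)
      (Finset.mem_singleton_self a) (Or.inl (Or.inr rfl)))
    have hsaord : sa.IsOrdinal := GMAux.dsup_ord hΔord P
    have hsasub : sa.toSet ⊆ Δ.toSet := GMAux.dsup_sub
    have hlevels_card : #{β : ZFSet | β ∈ Δ.toSet ∧ P β} < δ := by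
      have hch : ∀ β : {β : ZFSet | β ∈ Δ.toSet ∧ P β}, ∃ u : ZFSet,
          u ∈ a.toSet ∧ u ∈ T.toSet ∧ GM.HasLevel T R u (β : ZFSet) := fun β => β.2.2
      choose f hf1 hf2 hf3 using hch
      have hinj : Function.Injective (fun β : {β : ZFSet | β ∈ Δ.toSet ∧ P β} =>
          (⟨f β, hf1 β⟩ : a.toSet)) := by
        intro β β' hββ'
        have hval : f β = f β' := congrArg Subtype.val hββ'
        apply Subtype.ext
        exact GMAux.levelUnique (hval ▸ hf3 β) (hf3 β')
      exact lt_of_le_of_lt (Cardinal.mk_le_of_injective hinj) hacard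
    have hsacard : #sa.toSet < δ := GMAux.dsup_card hδ hΔsize P hlevels_card
    have hsane : sa ≠ Δ := by
      intro h
      rw [h, hΔcard] at hsacard
      exact lt_irrefl δ hsacard
    have hsaΔ : sa ∈ Δ.toSet :=
      (ZFSet.mem_toSet_s10 _ _).2 (GMAux.mem_of_subset_ne hsaord hΔord hsasub hsane)
    have hsaα : sa ∈ α.toSet := hkey sa hsaΔ hsaA
    set s : ZFSet := ((e ⟨sa, hsaα⟩ : GM.Pred T R t) : ZFSet) with hsdef
    have hsPred : s ∈ GM.Pred T R t := (e ⟨sa, hsaα⟩).2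
    have hlevs : GM.HasLevel T R s sa := GMAux.levelOfPred hαord htrans e he ⟨sa, hsaα⟩
    have hsT : s ∈ T.toSet := hsPred.1
    have hsA : s ∈ A := by
      refine hcl1 sa hsaA _ (GMAux.mem_FF_G1 (z := sa) (Finset.mem_singleton_self sa) ?_)
      exact Or.inl (Or.inl (Or.inl (by rw [if_pos hsaΔ]; exact Or.inl ⟨hsT, hlevs⟩)))
    have heq : x ∩ a = GMAux.predZ T R s ∩ a := by
      apply ZFSet.ext
      intro u
      rw [ZFSet.mem_inter, ZFSet.mem_inter]
      constructor
      · rintro ⟨hux, hua⟩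
        obtain ⟨huT, hpair⟩ := GMAux.mem_predZ.1 hux
        have hup : u ∈ GM.Pred T R t := ⟨(ZFSet.mem_toSet_s10 _ _).2 huT, hpair⟩
        have hlevu := GMAux.levelOfPred hαord htrans e he (e.symm ⟨u, hup⟩)
        rw [Equiv.apply_symm_apply] at hlevu
        have hγΔ : (↑(e.symm ⟨u, hup⟩) : ZFSet) ∈ Δ.toSet := by
          have h2 := (e.symm ⟨u, hup⟩).2
          rw [ZFSet.mem_toSet_s10] at h2 ⊢
          exact hΔord.isTransitive.mem_trans h2 ((ZFSet.mem_toSet_s10 _ _).1 hαmem)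
        have hγsa : (↑(e.symm ⟨u, hup⟩) : ZFSet) ∈ sa := by
          refine GMAux.mem_dsup.2 ⟨(ZFSet.mem_toSet_s10 _ _).1 hγΔ,
            ↑(e.symm ⟨u, hup⟩), hγΔ, ?_, Or.inr rfl⟩
          exact ⟨u, (ZFSet.mem_toSet_s10 _ _).2 hua, (ZFSet.mem_toSet_s10 _ _).2 huT, hlevu⟩
        have hpairus : ZFSet.pair u s ∈ R := by
          have h3 := (he (e.symm ⟨u, hup⟩) ⟨sa, hsaα⟩).1 hγsa
          rwa [Equiv.apply_symm_apply] at h3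
        exact ⟨GMAux.mem_predZ.2 ⟨huT, hpairus⟩, hua⟩
      · rintro ⟨hus, hua⟩
        obtain ⟨huT, hpair⟩ := GMAux.mem_predZ.1 hus
        exact ⟨GMAux.mem_predZ.2 ⟨huT, htrans u s t hpair hsPred.2⟩, hua⟩
    rw [heq]
    exact hcl2 s hsA a haA _
      (GMAux.mem_FF_inter (Finset.mem_insert_self s {a}) (by simp))
  obtain ⟨y, hyA, hyeq⟩ := hGuess x hBounded hApprox
  have hyH : GM.Hered θ y := hAX hyA
  have hwitA : ∀ u ∈ (GMAux.w1 T y ∪ GMAux.w2 R y ∪ GMAux.w3 T R Δ y), u ∈ A := by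
    intro u hu
    refine hcl1 y hyA _ (GMAux.mem_FF_G1 (z := y) (Finset.mem_singleton_self y) ?_)
    exact Or.inr (by rw [if_pos hyH]; exact hu)
  refine ⟨y, ?_, ?_, ?_⟩
  · by_contra hcon
    obtain ⟨u, huw, huy, huT⟩ := GMAux.w1_spec hcon
    have huA : u ∈ A := hwitA u (Or.inl (Or.inl huw))
    have hux : u ∈ x.toSet := ((Set.ext_iff.1 hyeq u).1 ⟨huy, huA⟩).1
    rw [hxPred] at hux
    exact huT hux.1
  · intro s1 hs1 s2 hs2
    by_contra hcon
    have hex : ∃ u v : ZFSet, u ∈ y.toSet ∧ v ∈ y.toSet ∧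
        ¬(u = v ∨ ZFSet.pair u v ∈ R ∨ ZFSet.pair v u ∈ R) := ⟨s1, s2, hs1, hs2, hcon⟩
    obtain ⟨u, huw, v, hvw, huy, hvy, hbad⟩ := GMAux.w2_spec hex
    have huA : u ∈ A := hwitA u (Or.inl (Or.inr huw))
    have hvA : v ∈ A := hwitA v (Or.inl (Or.inr hvw))
    have hux : u ∈ x.toSet := ((Set.ext_iff.1 hyeq u).1 ⟨huy, huA⟩).1
    have hvx : v ∈ x.toSet := ((Set.ext_iff.1 hyeq v).1 ⟨hvy, hvA⟩).1
    rw [hxPred] at hux hvx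
    have hγuord : (↑(e.symm ⟨u, hux⟩) : ZFSet).IsOrdinal :=
      GMAux.isOrdinal_mem hαord ((ZFSet.mem_toSet_s10 _ _).1 (e.symm ⟨u, hux⟩).2)
    have hγvord : (↑(e.symm ⟨v, hvx⟩) : ZFSet).IsOrdinal :=
      GMAux.isOrdinal_mem hαord ((ZFSet.mem_toSet_s10 _ _).1 (e.symm ⟨v, hvx⟩).2)
    rcases GMAux.tri _ _ hγuord hγvord with h | h | h
    · have h2 := (he (e.symm ⟨u, hux⟩) (e.symm ⟨v, hvx⟩)).1 h
      rw [Equiv.apply_symm_apply, Equiv.apply_symm_apply] at h2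
      exact hbad (Or.inr (Or.inl h2))
    · have h2 := congrArg e (Subtype.ext h :
        e.symm ⟨u, hux⟩ = e.symm ⟨v, hvx⟩)
      rw [Equiv.apply_symm_apply, Equiv.apply_symm_apply] at h2
      exact hbad (Or.inl (congrArg Subtype.val h2))
    · have h2 := (he (e.symm ⟨v, hvx⟩) (e.symm ⟨u, hux⟩)).1 h
      rw [Equiv.apply_symm_apply, Equiv.apply_symm_apply] at h2
      exact hbad (Or.inr (Or.inr h2))
  · intro β hβ
    by_contra hcon
    have hex : ∃ β' : ZFSet, β' ∈ Δ.toSet ∧ ∀ u ∈ y.toSet, ¬ GM.HasLevel T R u β' :=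
      ⟨β, hβ, fun u hu hl => hcon ⟨u, hu, hl⟩⟩
    obtain ⟨β', hβ'w, hβ'Δ, hβ'no⟩ := GMAux.w3_spec hex
    have hβ'A : β' ∈ A := hwitA β' (Or.inr hβ'w)
    have hβ'α : β' ∈ α.toSet := hkey β' hβ'Δ hβ'A
    have hlev := GMAux.levelOfPred hαord htrans e he ⟨β', hβ'α⟩
    have huT : (↑(e ⟨β', hβ'α⟩) : ZFSet) ∈ T.toSet := (e ⟨β', hβ'α⟩).2.1
    have huA : (↑(e ⟨β', hβ'α⟩) : ZFSet) ∈ A := by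
      refine hcl1 β' hβ'A _ (GMAux.mem_FF_G1 (z := β') (Finset.mem_singleton_self β') ?_)
      exact Or.inl (Or.inl (Or.inl (by rw [if_pos hβ'Δ]; exact Or.inl ⟨huT, hlev⟩)))
    have hux : (↑(e ⟨β', hβ'α⟩) : ZFSet) ∈ x.toSet := by
      rw [hxPred]; exact (e ⟨β', hβ'α⟩).2
    have huy : (↑(e ⟨β', hβ'α⟩) : ZFSet) ∈ y.toSet :=
      ((Set.ext_iff.1 hyeq _).2 ⟨hux, huA⟩).1
    exact hβ'no _ huy hlev
end

section
/- Assume GMP(δ⁺, δ⁺) is witnessed by models that are δ-close to δ⁺ (i.e., cof(sup(M ∩ δ⁺)) = δ) and <δ-closed. Then a tree T of height δ⁺ has no weak ascent path of width < δ if and only if T has no cofinal branch. Equivalently: if T has a weak ascent path of width γ < δ, then T has a cofinal branch. -/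
open Cardinal

namespace GMaux
open ZFSet
universe u v

/-! ### ZF ordinal basics -/

theorem isOrdinal_of_mem {x y : ZFSet.{u}} (hx : x.IsOrdinal) (h : y ∈ x) : y.IsOrdinal := by
  constructor
  · intro z hz w hw
    exact hx.mem_trans' hw hz h
  · intro a b c hab hbc hcy
    have hcx : c ∈ x := hx.isTransitive.mem_trans hcy h
    exact hx.mem_trans' hab hbc hcx

theorem ord_trichotomy : ∀ x : ZFSet.{u}, x.IsOrdinal → ∀ y : ZFSet.{u}, y.IsOrdinal →
    (x ∈ y ∨ x = y ∨ y ∈ x) := by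
  intro x
  induction x using WellFounded.induction ZFSet.mem_wf with
  | _ x IHx =>
    intro hx y
    induction y using WellFounded.induction ZFSet.mem_wf with
    | _ y IHy =>
      intro hy
      by_cases hxy : x ∈ y
      · exact Or.inl hxy
      by_cases hyx : y ∈ x
      · exact Or.inr (Or.inr hyx)
      refine Or.inr (Or.inl (ZFSet.ext fun a => ⟨fun ha => ?_, fun ha => ?_⟩))
      · rcases IHx a ha (isOrdinal_of_mem hx ha) y hy with h | h | h
        · exact h
        · exact absurd (h ▸ ha) hyx
        · exact absurd (hx.isTransitive.mem_trans h ha) hyx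
      · rcases IHy a ha (isOrdinal_of_mem hy ha) with h | h | h
        · exact absurd (hy.isTransitive.mem_trans h ha) hxy
        · exact absurd (h ▸ ha) hxy
        · exact h

theorem ord_mem_of_ssubset {x y : ZFSet.{u}} (hx : x.IsOrdinal) (hy : y.IsOrdinal)
    (hsub : x ⊆ y) (hne : x ≠ y) : x ∈ y := by
  rcases ord_trichotomy x hx y hy with h | h | h
  · exact h
  · exact absurd h hne
  · exact absurd (hsub h) (ZFSet.mem_irrefl y)

theorem ord_mem_of_subset_of_mem {x y z : ZFSet.{u}} (hx : x.IsOrdinal) (hz : z.IsOrdinal)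
    (hxy : x ⊆ y) (hyz : y ∈ z) : x ∈ z := by
  have hyo : y.IsOrdinal := isOrdinal_of_mem hz hyz
  rcases ord_trichotomy x hx y hyo with h | h | h
  · exact hz.isTransitive.subset_of_mem hyz h
  · exact h ▸ hyz
  · exact absurd (hxy h) (ZFSet.mem_irrefl y)

theorem isOrdinal_sUnion {x : ZFSet.{u}} (h : ∀ y ∈ x, ZFSet.IsOrdinal y) :
    ZFSet.IsOrdinal (⋃₀ x : ZFSet) := by
  constructor
  · exact ZFSet.IsTransitive.sUnion' fun y hy => (h y hy).isTransitive
  · intro a b c hab hbc hc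
    rcases ZFSet.mem_sUnion.1 hc with ⟨w, hwx, hcw⟩
    have hco : c.IsOrdinal := isOrdinal_of_mem (h w hwx) hcw
    exact hco.isTransitive.mem_trans hab hbc

/-- Rigidity: ∈-isomorphic ordinals are equal. -/
theorem ord_rigid : ∀ a : ZFSet.{u}, a.IsOrdinal → ∀ b : ZFSet.{u}, b.IsOrdinal →
    ∀ e : a.toSet ≃ b.toSet,
      (∀ p q : a.toSet, (p : ZFSet) ∈ (q : ZFSet) ↔ ((e p : ZFSet) ∈ (e q : ZFSet))) →
      a = b := by
  intro a
  induction a using WellFounded.induction ZFSet.mem_wf with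
  | _ a IH =>
    intro ha b hb e he
    have key : ∀ c : a.toSet, (c : ZFSet) = (e c : ZFSet) := by
      intro c
      have hc : (c : ZFSet).IsOrdinal := isOrdinal_of_mem ha c.2
      have hec : ((e c : ZFSet)).IsOrdinal := isOrdinal_of_mem hb (e c).2
      have hsubc : (c : ZFSet).toSet ⊆ a.toSet := fun d hd => ha.isTransitive.mem_trans hd c.2
      have hsubec : ((e c : ZFSet)).toSet ⊆ b.toSet :=
        fun d hd => hb.isTransitive.mem_trans hd (e c).2
      refine IH c c.2 hc (e c) hec ?_ ?_
      · refine Equiv.ofBijective (fun d => ⟨e ⟨d, hsubc d.2⟩, ?_⟩) ⟨?_, ?_⟩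
        · exact (he ⟨d, hsubc d.2⟩ c).1 d.2
        · intro d₁ d₂ hd
          have h1 : (e ⟨(d₁ : ZFSet), hsubc d₁.2⟩ : ZFSet) = (e ⟨(d₂ : ZFSet), hsubc d₂.2⟩ : ZFSet) := by
            simpa using congrArg Subtype.val hd
          have h2 : (⟨(d₁ : ZFSet), hsubc d₁.2⟩ : a.toSet) = ⟨(d₂ : ZFSet), hsubc d₂.2⟩ :=
            e.injective (Subtype.ext h1)
          have h3 : (d₁ : ZFSet) = (d₂ : ZFSet) := by simpa using congrArg Subtype.val h2
          exact Subtype.ext h3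
        · intro d'
          have hd'b : (d' : ZFSet) ∈ b.toSet := hsubec d'.2
          have : (e.symm ⟨d', hd'b⟩ : ZFSet) ∈ (c : ZFSet) := by
            have := (he (e.symm ⟨d', hd'b⟩) c).2
            simp only [Equiv.apply_symm_apply] at this
            exact this d'.2
          exact ⟨⟨_, this⟩, by simp [Subtype.ext_iff]⟩
      · intro p q
        simp only [Equiv.ofBijective]
        exact he ⟨p, hsubc p.2⟩ ⟨q, hsubc q.2⟩
    apply ZFSet.ext
    intro z
    constructor
    · intro hz
      have h := key ⟨z, hz⟩
      have : z = ((e ⟨z, hz⟩ : b.toSet) : ZFSet) := h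
      rw [this]
      exact (e ⟨z, hz⟩).2
    · intro hz
      have h := key (e.symm ⟨z, hz⟩)
      rw [Equiv.apply_symm_apply] at h
      have : ((e.symm ⟨z, hz⟩ : a.toSet) : ZFSet) = z := h
      rw [← this]
      exact (e.symm ⟨z, hz⟩).2

/-! ### Levels in trees -/

variable {T R : ZFSet.{u}}

theorem pred_comparable {s : ZFSet.{u}} {α : ZFSet.{v}} (h : GM.HasLevel T R s α)
    {p q : ZFSet.{u}}
    (hp : p ∈ GM.Pred T R s) (hq : q ∈ GM.Pred T R s) :
    p = q ∨ ZFSet.pair p q ∈ R ∨ ZFSet.pair q p ∈ R := by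
  obtain ⟨hαo, e, he⟩ := h
  set cp := e.symm ⟨p, hp⟩ with hcp
  set cq := e.symm ⟨q, hq⟩ with hcq
  have hpcp : ((e cp : ZFSet)) = p := by rw [hcp, Equiv.apply_symm_apply]
  have hqcq : ((e cq : ZFSet)) = q := by rw [hcq, Equiv.apply_symm_apply]
  rcases ord_trichotomy (cp : ZFSet) (isOrdinal_of_mem hαo cp.2) (cq : ZFSet)
      (isOrdinal_of_mem hαo cq.2) with h | h | h
  · refine Or.inr (Or.inl ?_)
    have := (he cp cq).1 h
    rwa [hpcp, hqcq] at this
  · refine Or.inl ?_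
    have : cp = cq := Subtype.ext h
    rw [← hpcp, ← hqcq, this]
  · refine Or.inr (Or.inr ?_)
    have := (he cq cp).1 h
    rwa [hpcp, hqcq] at this

theorem hasLevel_restrict
    (hR : ∀ a b c : ZFSet.{u}, ZFSet.pair a b ∈ R → ZFSet.pair b c ∈ R → ZFSet.pair a c ∈ R)
    {s : ZFSet.{u}} {α : ZFSet.{v}} (hαo : α.IsOrdinal) (e : α.toSet ≃ GM.Pred T R s)
    (he : ∀ a b : α.toSet, (a : ZFSet) ∈ (b : ZFSet) ↔
      ZFSet.pair (e a : ZFSet) (e b : ZFSet) ∈ R)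
    (c : α.toSet) : GM.HasLevel T R (e c : ZFSet) (c : ZFSet) := by
  have hco : (c : ZFSet).IsOrdinal := isOrdinal_of_mem hαo c.2
  have hsub : ∀ d : (c : ZFSet).toSet, (d : ZFSet) ∈ α.toSet :=
    fun d => hαo.isTransitive.mem_trans d.2 c.2
  refine ⟨hco, ?_⟩
  have hmem : ∀ d : (c : ZFSet).toSet,
      (e ⟨(d : ZFSet), hsub d⟩ : ZFSet) ∈ GM.Pred T R (e c : ZFSet) := by
    intro d
    refine ⟨(e ⟨(d : ZFSet), hsub d⟩).2.1, ?_⟩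
    exact (he ⟨(d : ZFSet), hsub d⟩ c).1 d.2
  refine ⟨Equiv.ofBijective (fun d => ⟨_, hmem d⟩) ⟨?_, ?_⟩, ?_⟩
  · intro d₁ d₂ hd
    have h1 : (e ⟨(d₁ : ZFSet), hsub d₁⟩ : ZFSet) = (e ⟨(d₂ : ZFSet), hsub d₂⟩ : ZFSet) := by
      simpa using congrArg Subtype.val hd
    have h2 : (⟨(d₁ : ZFSet), hsub d₁⟩ : α.toSet) = ⟨(d₂ : ZFSet), hsub d₂⟩ :=
      e.injective (Subtype.ext h1)
    have h3 : (d₁ : ZFSet) = (d₂ : ZFSet) := by simpa using congrArg Subtype.val h2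
    exact Subtype.ext h3
  · rintro ⟨w, hwT, hwR⟩
    have hwRs : ZFSet.pair w s ∈ R := hR w (e c : ZFSet) s hwR (e c).2.2
    set d0 := e.symm ⟨w, hwT, hwRs⟩ with hd0
    have hed0 : ((e d0 : ZFSet)) = w := by rw [hd0, Equiv.apply_symm_apply]
    have hd0c : (d0 : ZFSet) ∈ (c : ZFSet) := by
      refine (he d0 c).2 ?_
      rw [hed0]
      exact hwR
    refine ⟨⟨(d0 : ZFSet), hd0c⟩, ?_⟩
    apply Subtype.ext
    show (e ⟨(d0 : ZFSet), hsub ⟨(d0 : ZFSet), hd0c⟩⟩ : ZFSet) = w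
    rw [show (⟨(d0 : ZFSet), hsub ⟨(d0 : ZFSet), hd0c⟩⟩ : α.toSet) = d0 from Subtype.ext rfl]
    exact hed0
  · intro p q
    exact he ⟨(p : ZFSet), hsub p⟩ ⟨(q : ZFSet), hsub q⟩

theorem level_unique {w : ZFSet.{u}} {μ ν : ZFSet.{v}} (h1 : GM.HasLevel T R w μ)
    (h2 : GM.HasLevel T R w ν) : μ = ν := by
  obtain ⟨hμo, e1, he1⟩ := h1
  obtain ⟨hνo, e2, he2⟩ := h2
  refine ord_rigid μ hμo ν hνo (e1.trans e2.symm) ?_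
  intro p q
  rw [he1 p q]
  have := he2 (e2.symm (e1 p)) (e2.symm (e1 q))
  simp only [Equiv.apply_symm_apply] at this
  exact this.symm

theorem exists_unique_level_pred
    (hR : ∀ a b c : ZFSet.{u}, ZFSet.pair a b ∈ R → ZFSet.pair b c ∈ R → ZFSet.pair a c ∈ R)
    {s : ZFSet.{u}} {α : ZFSet.{v}} (h : GM.HasLevel T R s α) {c : ZFSet.{v}} (hc : c ∈ α) :
    ∃! w : ZFSet.{u}, (w ∈ T.toSet ∧ ZFSet.pair w s ∈ R) ∧ GM.HasLevel T R w c := by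
  obtain ⟨hαo, e, he⟩ := h
  have hc' : c ∈ α.toSet := hc
  refine ⟨(e ⟨c, hc'⟩ : ZFSet), ⟨(e ⟨c, hc'⟩).2, ?_⟩, ?_⟩
  · exact hasLevel_restrict hR hαo e he ⟨c, hc'⟩
  · rintro w' ⟨hw', hlev'⟩
    set d := e.symm ⟨w', hw'⟩ with hd
    have hed : ((e d : ZFSet)) = w' := by rw [hd, Equiv.apply_symm_apply]
    have hld : GM.HasLevel T R (e d : ZFSet) (d : ZFSet) := hasLevel_restrict hR hαo e he d
    rw [hed] at hld
    have : (d : ZFSet) = c := level_unique hld hlev'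
    rw [← hed, show d = ⟨c, hc'⟩ from Subtype.ext this]

theorem pred_mem_of_level_mem
    (hR : ∀ a b c : ZFSet.{u}, ZFSet.pair a b ∈ R → ZFSet.pair b c ∈ R → ZFSet.pair a c ∈ R)
    {s : ZFSet.{u}} {α : ZFSet.{v}} (h : GM.HasLevel T R s α) {w u : ZFSet.{u}}
    {μ ν : ZFSet.{v}}
    (hw : w ∈ GM.Pred T R s) (hu : u ∈ GM.Pred T R s)
    (hlw : GM.HasLevel T R w μ) (hlu : GM.HasLevel T R u ν) (hμν : μ ∈ ν) :
    ZFSet.pair w u ∈ R := by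
  obtain ⟨hαo, e, he⟩ := h
  set cw := e.symm ⟨w, hw⟩ with hcw
  set cu := e.symm ⟨u, hu⟩ with hcu
  have hew : ((e cw : ZFSet)) = w := by rw [hcw, Equiv.apply_symm_apply]
  have heu : ((e cu : ZFSet)) = u := by rw [hcu, Equiv.apply_symm_apply]
  have hlw' : GM.HasLevel T R w (cw : ZFSet) := hew ▸ hasLevel_restrict hR hαo e he cw
  have hlu' : GM.HasLevel T R u (cu : ZFSet) := heu ▸ hasLevel_restrict hR hαo e he cu
  have h1 : (cw : ZFSet) = μ := level_unique hlw' hlw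
  have h2 : (cu : ZFSet) = ν := level_unique hlu' hlu
  have hmem : (cw : ZFSet) ∈ (cu : ZFSet) := by rw [h1, h2]; exact hμν
  have := (he cw cu).1 hmem
  rwa [hew, heu] at this

/-! ### Hereditary smallness -/

theorem hered_card {θ : Cardinal.{1}} {x : ZFSet} (h : GM.Hered θ x) : #x.toSet < θ := by
  cases h with | intro x h1 h2 => exact h1

theorem hered_mem {θ : Cardinal.{1}} {x y : ZFSet} (h : GM.Hered θ x) (hy : y ∈ x) :
    GM.Hered θ y := by
  cases h with | intro x h1 h2 => exact h2 y hy

theorem hered_of_subset {θ : Cardinal.{1}} {x z : ZFSet} (h : GM.Hered θ x) (hz : z ⊆ x) :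
    GM.Hered θ z := by
  refine GM.Hered.intro z ?_ ?_
  · exact lt_of_le_of_lt (Cardinal.mk_le_mk_of_subset (ZFSet.coe_subset_coe.2 hz)) (hered_card h)
  · intro y hy
    exact hered_mem h (hz hy)

theorem hered_ordinal {θ δ : Cardinal.{1}} (hδθ : δ < θ) :
    ∀ o : ZFSet, o.IsOrdinal → #o.toSet ≤ δ → GM.Hered θ o := by
  intro o
  induction o using WellFounded.induction ZFSet.mem_wf with
  | _ o IH =>
    intro ho hcard
    refine GM.Hered.intro o (lt_of_le_of_lt hcard hδθ) ?_
    intro y hy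
    refine IH y hy (isOrdinal_of_mem ho hy) ?_
    exact le_trans (Cardinal.mk_le_mk_of_subset
      (ZFSet.coe_subset_coe.2 (ho.isTransitive.subset_of_mem hy))) hcard

theorem exists_hered_bound : ∀ x : ZFSet.{0}, ∃ c : Cardinal.{1}, ∀ θ, c < θ → GM.Hered θ x := by
  intro x
  induction x using WellFounded.induction ZFSet.mem_wf with
  | _ x IH =>
    have hf : ∀ y : x.toSet, ∃ c : Cardinal.{1}, ∀ θ, c < θ → GM.Hered θ (y : ZFSet) :=
      fun y => IH y y.2
    choose f hf using hf
    refine ⟨max (#x.toSet) (⨆ y : x.toSet, f y), fun θ hθ => ?_⟩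
    refine GM.Hered.intro x (lt_of_le_of_lt (le_max_left _ _) hθ) ?_
    intro y hy
    refine hf ⟨y, hy⟩ θ (lt_of_le_of_lt ?_ hθ)
    exact le_trans (le_ciSup (Cardinal.bddAbove_range _) (⟨y, hy⟩ : x.toSet)) (le_max_right _ _)

theorem hered_finite {θ : Cardinal.{1}} (hθ : Cardinal.aleph0 ≤ θ) {x : ZFSet.{0}}
    (hfin : x.toSet.Finite) (h : ∀ y ∈ x, GM.Hered θ y) : GM.Hered θ x :=
  GM.Hered.intro x (lt_of_lt_of_le hfin.lt_aleph0 hθ) h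

theorem hered_pair {θ : Cardinal.{1}} (hθ : Cardinal.aleph0 ≤ θ) {p q : ZFSet.{0}}
    (hp : GM.Hered θ p) (hq : GM.Hered θ q) : GM.Hered θ (ZFSet.pair p q) := by
  have hs : GM.Hered θ ({p} : ZFSet) := by
    refine hered_finite hθ ?_ ?_
    · rw [show ∀ a : ZFSet, ({a} : ZFSet).toSet = {a} from ZFSet.coe_singleton]; exact Set.finite_singleton p
    · intro y hy
      rw [ZFSet.mem_singleton] at hy
      exact hy ▸ hp
  have hd : GM.Hered θ ({p, q} : ZFSet) := by
    refine hered_finite hθ ?_ ?_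
    · rw [show ∀ a b : ZFSet, (insert a b : ZFSet).toSet = insert a b.toSet from ZFSet.coe_insert, show ∀ a : ZFSet, ({a} : ZFSet).toSet = {a} from ZFSet.coe_singleton]
      exact (Set.finite_singleton q).insert p
    · intro y hy
      rcases ZFSet.mem_pair.1 hy with h | h
      · exact h ▸ hp
      · exact h ▸ hq
  show GM.Hered θ ({{p}, {p, q}} : ZFSet)
  refine hered_finite hθ ?_ ?_
  · rw [show ∀ a b : ZFSet, (insert a b : ZFSet).toSet = insert a b.toSet from ZFSet.coe_insert, show ∀ a : ZFSet, ({a} : ZFSet).toSet = {a} from ZFSet.coe_singleton]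
    exact (Set.finite_singleton _).insert _
  · intro y hy
    rcases ZFSet.mem_pair.1 hy with h | h
    · exact h ▸ hs
    · exact h ▸ hd

/-! ### Cardinality helpers -/

theorem card_union_le {δ : Cardinal.{1}} (hδ : Cardinal.aleph0 ≤ δ) {s t : Set ZFSet.{0}}
    (hs : #s ≤ δ) (ht : #t ≤ δ) : #(s ∪ t : Set ZFSet) ≤ δ :=
  le_trans (Cardinal.mk_union_le s t) (le_trans (add_le_add hs ht) (Cardinal.add_eq_self hδ).le)

theorem card_biUnion_le {δ : Cardinal.{1}} (hδ : Cardinal.aleph0 ≤ δ) {s : Set ZFSet.{0}}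
    (hs : #s ≤ δ) {f : ZFSet → Set ZFSet} (hf : ∀ u ∈ s, #(f u) ≤ δ) :
    #(⋃ u ∈ s, f u) ≤ δ := by
  refine le_trans (Cardinal.mk_biUnion_le f s) ?_
  refine le_trans (mul_le_mul' hs (ciSup_le' fun u => hf u.1 u.2)) ?_
  exact (Cardinal.mul_eq_self hδ).le

theorem card_sUnion_le {δ : Cardinal.{1}} (hδ : Cardinal.aleph0 ≤ δ) {z : ZFSet.{0}}
    (hz : #z.toSet ≤ δ) (hm : ∀ y ∈ z, #y.toSet ≤ δ) : #(⋃₀ z : ZFSet).toSet ≤ δ := by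
  have hsub : (⋃₀ z : ZFSet).toSet ⊆ ⋃ y ∈ z.toSet, ZFSet.toSet y := by
    intro w hw
    rcases ZFSet.mem_sUnion.1 hw with ⟨y, hyz, hwy⟩
    exact Set.mem_biUnion hyz hwy
  refine le_trans (Cardinal.mk_le_mk_of_subset hsub) ?_
  exact card_biUnion_le hδ hz fun y hy => hm y hy

/-! ### Selector functions for the closure argument -/

section Selectors
open scoped Classical
variable (Λ γ : ZFSet.{0}) (T R : ZFSet.{u}) (t : ZFSet.{0} → ZFSet.{0} → ZFSet.{u})

/-- sup of the first coordinates (lying in `Λ`) of pairs in `a`. -/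
noncomputable def sigmaD (a : ZFSet.{0}) : ZFSet.{0} :=
  (⋃₀ (ZFSet.sep (fun β => ∃ ζ, ζ ∈ γ.toSet ∧ ZFSet.pair β ζ ∈ a) Λ) : ZFSet)

/-- the trace of the cone below `t u v` on the pairs in `a`. -/
def sepD (a u' v' : ZFSet.{0}) : ZFSet.{0} :=
  ZFSet.sep (fun p => ∃ β ζ, β ∈ Λ.toSet ∧ ζ ∈ γ.toSet ∧ p = ZFSet.pair β ζ ∧
    ZFSet.pair (t β ζ) (t u' v') ∈ R) a

/-- selector for an incompatible pair of codes in `u`. -/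
noncomputable def incompD (u : ZFSet.{0}) : Set ZFSet.{0} :=
  if h : ∃ p₁ p₂ : ZFSet × ZFSet,
      (p₁.1 ∈ Λ.toSet ∧ p₁.2 ∈ γ.toSet ∧ ZFSet.pair p₁.1 p₁.2 ∈ u) ∧
      (p₂.1 ∈ Λ.toSet ∧ p₂.2 ∈ γ.toSet ∧ ZFSet.pair p₂.1 p₂.2 ∈ u) ∧
      t p₁.1 p₁.2 ≠ t p₂.1 p₂.2 ∧
      ZFSet.pair (t p₁.1 p₁.2) (t p₂.1 p₂.2) ∉ R ∧
      ZFSet.pair (t p₂.1 p₂.2) (t p₁.1 p₁.2) ∉ R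
  then {ZFSet.pair h.choose.1 h.choose.2,
        ZFSet.pair h.choose_spec.choose.1 h.choose_spec.choose.2} else ∅

/-- selector for a level missed by the codes in `u`. -/
noncomputable def missD (u : ZFSet.{0}) : Set ZFSet.{0} :=
  if h : ∃ α, α ∈ Λ.toSet ∧ ¬∃ β ζ, β ∈ Λ.toSet ∧ ζ ∈ γ.toSet ∧
      ZFSet.pair β ζ ∈ u ∧ α ∈ β.toSet
  then {h.choose} else ∅

/-- the closure function to which stationarity is applied. -/
noncomputable def FD (P2 : ZFSet.{0}) (θ : Cardinal.{1}) (a : Finset ZFSet.{0}) :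
    Set ZFSet.{0} :=
  (({P2} ∪ γ.toSet
   ∪ (⋃ p ∈ (a : Set ZFSet), ⋃ q ∈ (a : Set ZFSet), {ZFSet.pair p q})
   ∪ (sigmaD Λ γ) '' (a : Set ZFSet)
   ∪ (⋃ p ∈ (a : Set ZFSet), ⋃ q ∈ (a : Set ZFSet), ⋃ r ∈ (a : Set ZFSet),
        {sepD Λ γ R t p q r})
   ∪ (⋃ p ∈ (a : Set ZFSet), incompD Λ γ R t p)
   ∪ (⋃ p ∈ (a : Set ZFSet), missD Λ γ p)) : Set ZFSet) ∩ GM.HSet θ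

theorem FD_card {δ : Cardinal.{1}} (hδ : Cardinal.aleph0 ≤ δ) (hγ : #γ.toSet ≤ δ)
    (P2 : ZFSet.{0}) (θ : Cardinal.{1}) (a : Finset ZFSet.{0}) :
    #(FD Λ γ R t P2 θ a) ≤ δ := by
  have hfin : ∀ s : Set ZFSet.{0}, s.Finite → #s ≤ δ :=
    fun s hs => le_trans hs.lt_aleph0.le hδ
  have ha : #((a : Set ZFSet.{0})) ≤ δ := hfin _ a.finite_toSet
  have h1 : (1 : Cardinal.{1}) ≤ δ := le_trans Cardinal.one_le_aleph0 hδ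
  refine le_trans (Cardinal.mk_le_mk_of_subset Set.inter_subset_left) ?_
  refine card_union_le hδ (card_union_le hδ (card_union_le hδ (card_union_le hδ
    (card_union_le hδ (card_union_le hδ (hfin _ (Set.finite_singleton _)) hγ) ?_) ?_) ?_) ?_) ?_
  · refine card_biUnion_le hδ ha fun p _ => card_biUnion_le hδ ha fun q _ => ?_
    exact le_trans (Cardinal.mk_singleton _).le h1
  · exact le_trans Cardinal.mk_image_le ha
  · refine card_biUnion_le hδ ha fun p _ => card_biUnion_le hδ ha fun q _ =>
      card_biUnion_le hδ ha fun r _ => ?_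
    exact le_trans (Cardinal.mk_singleton _).le h1
  · refine card_biUnion_le hδ ha fun p _ => hfin _ ?_
    rw [incompD]
    split
    · exact (Set.finite_singleton _).insert _
    · exact Set.finite_empty
  · refine card_biUnion_le hδ ha fun p _ => hfin _ ?_
    rw [missD]
    split
    · exact Set.finite_singleton _
    · exact Set.finite_empty

theorem card_sigma_index (a : ZFSet.{0}) :
    #(ZFSet.sep (fun β => ∃ ζ, ζ ∈ γ.toSet ∧ ZFSet.pair β ζ ∈ a) Λ).toSet ≤ #a.toSet := by
  classical
  have hmem : ∀ β : (ZFSet.sep (fun β => ∃ ζ, ζ ∈ γ.toSet ∧ ZFSet.pair β ζ ∈ a) Λ).toSet,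
      ∃ ζ, ζ ∈ γ.toSet ∧ ZFSet.pair (β : ZFSet) ζ ∈ a := fun β => (ZFSet.mem_sep.1 β.2).2
  choose ζf hζf1 hζf2 using hmem
  refine Cardinal.mk_le_of_injective (f := fun β => (⟨ZFSet.pair (β : ZFSet) (ζf β), hζf2 β⟩ :
    a.toSet)) ?_
  intro b1 b2 h
  have h1 : ZFSet.pair (b1 : ZFSet) (ζf b1) = ZFSet.pair (b2 : ZFSet) (ζf b2) :=
    congrArg Subtype.val h
  exact Subtype.ext (ZFSet.pair_injective h1).1

theorem pair_mem_P2 {Λ' γ' β ζ : ZFSet.{0}} (hβ : β ∈ Λ') (hζ : ζ ∈ γ') :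
    ZFSet.pair β ζ ∈ ZFSet.powerset (ZFSet.powerset (Λ' ∪ γ')) := by
  rw [ZFSet.mem_powerset]
  intro z hz
  rcases ZFSet.mem_pair.1 hz with h | h
  · subst h
    rw [ZFSet.mem_powerset]
    intro w hw
    rw [ZFSet.mem_singleton] at hw
    subst hw
    exact ZFSet.mem_union.2 (Or.inl hβ)
  · subst h
    rw [ZFSet.mem_powerset]
    intro w hw
    rcases ZFSet.mem_pair.1 hw with h | h
    · exact h ▸ ZFSet.mem_union.2 (Or.inl hβ)
    · exact h ▸ ZFSet.mem_union.2 (Or.inr hζ)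

end Selectors
end GMaux


/-- under `GMP(δ⁺, δ⁺)` witnessed by `<δ`-closed models δ-close
to δ⁺, a tree of height δ⁺ with a weak ascent path of width `< δ` has a
cofinal branch. -/
theorem stmt11
    (δ : Cardinal.{1}) (hδ : δ.IsRegular) (hδu : Cardinal.aleph0 < δ)
    (hGMP : GM.GMPwit (Order.succ δ) (Order.succ δ)
      (fun M => GM.cofSup {x | x ∈ M ∧ x.IsOrdinal ∧ #x.toSet ≤ δ} = δ ∧
        GM.ClosedUnder δ M))
    (T R Λ : ZFSet) (hΛ : GM.IsCardOrd Λ (Order.succ δ))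
    (htree : GM.IsTreeOfHeight T R Λ)
    (γ : ZFSet) (hγ : γ.IsOrdinal) (hγδ : #γ.toSet < δ) (hγne : γ ≠ ∅)
    (t : ZFSet → ZFSet → ZFSet)
    (hlev : ∀ α ∈ Λ.toSet, ∀ ζ ∈ γ.toSet, t α ζ ∈ T.toSet ∧ GM.HasLevel T R (t α ζ) α)
    (hasc : ∀ α ∈ Λ.toSet, ∀ β ∈ Λ.toSet, α ∈ β.toSet →
      ∃ ζ ∈ γ.toSet, ∃ η ∈ γ.toSet, ZFSet.pair (t α ζ) (t β η) ∈ R) :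
    ∃ b : ZFSet, GM.IsBranch T R Λ b := by
  classical
  have hδ0 : Cardinal.aleph0 ≤ δ := hδu.le
  have hγδ' : #γ.toSet ≤ δ := hγδ.le
  obtain ⟨hΛo, hΛcard, hΛel⟩ := hΛ
  obtain ⟨-, hRel, htrans, hirr, hlevels, hlevelsur⟩ := htree
  set P2 : ZFSet.{0} := ZFSet.powerset (ZFSet.powerset (Λ ∪ γ)) with hP2def
  obtain ⟨cΛ, hcΛ⟩ := GMaux.exists_hered_bound Λ
  obtain ⟨cγ, hcγ⟩ := GMaux.exists_hered_bound γ
  obtain ⟨cP, hcP⟩ := GMaux.exists_hered_bound P2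
  obtain ⟨θ₀, hθ₀⟩ := hGMP
  set θ : Cardinal.{1} := Order.succ (max (max θ₀ δ) (max cΛ (max cγ cP))) with hθdef
  have hbig : ∀ c : Cardinal.{1}, c ≤ max (max θ₀ δ) (max cΛ (max cγ cP)) → c < θ :=
    fun c hc => lt_of_le_of_lt hc (Order.lt_succ _)
  have hθreg : θ.IsRegular := by
    refine Cardinal.isRegular_succ (le_trans hδ0 ?_)
    exact le_trans (le_max_right θ₀ δ) (le_max_left _ _)
  have hθ0le : θ₀ ≤ θ := (hbig θ₀ (le_trans (le_max_left _ _) (le_max_left _ _))).le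
  have hδθ : δ < θ := hbig δ (le_trans (le_max_right _ _) (le_max_left _ _))
  have hθ0' : Cardinal.aleph0 ≤ θ := le_trans (le_trans hδ0 hδθ.le) (le_refl θ)
  have hΛH : GM.Hered θ Λ := hcΛ θ (hbig cΛ (le_trans (le_max_left _ _) (le_max_right _ _)))
  have hγH : GM.Hered θ γ := hcγ θ (hbig cγ
    (le_trans (le_trans (le_max_left _ _) (le_max_right _ _)) (le_max_right _ _)))
  have hPH : GM.Hered θ P2 := hcP θ (hbig cP
    (le_trans (le_trans (le_max_right _ _) (le_max_right _ _)) (le_max_right _ _)))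
  -- apply stationarity to the closure function FD
  have hstat := hθ₀ θ hθ0le hθreg (GMaux.FD Λ γ R t P2 θ) (fun a =>
    ⟨Set.inter_subset_right, Order.lt_succ_iff.2 (GMaux.FD_card Λ γ R t hδ0 hγδ' P2 θ a)⟩)
  obtain ⟨M, hMS, hMsub, hMcard, hclF⟩ := hstat
  obtain ⟨hElem, hGuess, hMcard', hcof, hclosed⟩ := hMS
  have hMδ : #M ≤ δ := Order.lt_succ_iff.1 hMcard'
  -- closure helper lemmas
  have hmemFD : ∀ (a : Finset ZFSet), (↑a : Set ZFSet) ⊆ M → ∀ z : ZFSet,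
      GM.Hered θ z →
      z ∈ ({P2} : Set ZFSet) ∪ γ.toSet
        ∪ (⋃ p ∈ (a : Set ZFSet), ⋃ q ∈ (a : Set ZFSet), {ZFSet.pair p q})
        ∪ (GMaux.sigmaD Λ γ) '' (a : Set ZFSet)
        ∪ (⋃ p ∈ (a : Set ZFSet), ⋃ q ∈ (a : Set ZFSet), ⋃ r ∈ (a : Set ZFSet),
            {GMaux.sepD Λ γ R t p q r})
        ∪ (⋃ p ∈ (a : Set ZFSet), GMaux.incompD Λ γ R t p)
        ∪ (⋃ p ∈ (a : Set ZFSet), GMaux.missD Λ γ p)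
      → z ∈ M :=
    fun a ha z hz hmem => hclF a ha ⟨hmem, hz⟩
  have hP2M : P2 ∈ M := hmemFD ∅ (by simp) P2 hPH
    (Set.mem_union_left _ (Set.mem_union_left _ (Set.mem_union_left _ (Set.mem_union_left _
      (Set.mem_union_left _ (Set.mem_union_left _ (Set.mem_singleton _)))))))
  have hγM : ∀ ζ ∈ γ.toSet, ζ ∈ M := fun ζ hζ => hmemFD ∅ (by simp) ζ
    (GMaux.hered_mem hγH hζ)
    (Set.mem_union_left _ (Set.mem_union_left _ (Set.mem_union_left _ (Set.mem_union_left _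
      (Set.mem_union_left _ (Set.mem_union_right _ hζ))))))
  have hpairM : ∀ p, p ∈ M → ∀ q, q ∈ M → ZFSet.pair p q ∈ M := by
    intro p hp q hq
    refine hmemFD {p, q} (by simp [hp, hq, Set.insert_subset_iff]) _
      (GMaux.hered_pair hθ0' (hMsub hp) (hMsub hq)) ?_
    refine Set.mem_union_left _ (Set.mem_union_left _ (Set.mem_union_left _
      (Set.mem_union_left _ (Set.mem_union_right _ ?_))))
    exact Set.mem_biUnion (by simp) (Set.mem_biUnion (by simp) (Set.mem_singleton _))
  have hσM : ∀ a, a ∈ M → GM.Hered θ (GMaux.sigmaD Λ γ a) → GMaux.sigmaD Λ γ a ∈ M := by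
    intro a ha hh
    refine hmemFD {a} (by simpa using ha) _ hh ?_
    refine Set.mem_union_left _ (Set.mem_union_left _ (Set.mem_union_left _
      (Set.mem_union_right _ ?_)))
    exact Set.mem_image_of_mem _ (by simp)
  have hsepM : ∀ a, a ∈ M → ∀ p, p ∈ M → ∀ q, q ∈ M →
      GM.Hered θ (GMaux.sepD Λ γ R t a p q) → GMaux.sepD Λ γ R t a p q ∈ M := by
    intro a ha p hp q hq hh
    refine hmemFD {a, p, q} (by simp [ha, hp, hq, Set.insert_subset_iff]) _ hh ?_
    refine Set.mem_union_left _ (Set.mem_union_left _ (Set.mem_union_right _ ?_))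
    exact Set.mem_biUnion (by simp) (Set.mem_biUnion (by simp)
      (Set.mem_biUnion (by simp) (Set.mem_singleton _)))
  have hincM : ∀ u, u ∈ M → ∀ z ∈ GMaux.incompD Λ γ R t u, GM.Hered θ z → z ∈ M := by
    intro u hu z hz hh
    refine hmemFD {u} (by simpa using hu) _ hh ?_
    refine Set.mem_union_left _ (Set.mem_union_right _ ?_)
    exact Set.mem_biUnion (by simp) hz
  have hmissM : ∀ u, u ∈ M → ∀ z ∈ GMaux.missD Λ γ u, GM.Hered θ z → z ∈ M := by
    intro u hu z hz hh
    refine hmemFD {u} (by simpa using hu) _ hh ?_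
    refine Set.mem_union_right _ ?_
    exact Set.mem_biUnion (by simp) hz
  -- the set of small ordinals of M
  set Aset : Set ZFSet := {x | x ∈ M ∧ x.IsOrdinal ∧ #x.toSet ≤ δ} with hAdef
  have hcof' : GM.cofSup Aset = δ := hcof
  have hordΛmem : ∀ x : ZFSet, x.IsOrdinal → #x.toSet ≤ δ → x ∈ Λ := by
    intro x hx hxc
    rcases GMaux.ord_trichotomy x hx Λ hΛo with h | h | h
    · exact h
    · exfalso
      rw [h, hΛcard] at hxc
      exact absurd (lt_of_lt_of_le (Order.lt_succ δ) hxc) (lt_irrefl δ)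
    · exfalso
      have hsub : Λ ⊆ x := hx.isTransitive.subset_of_mem h
      have hle : #Λ.toSet ≤ #x.toSet :=
        Cardinal.mk_le_mk_of_subset (ZFSet.coe_subset_coe.2 hsub)
      rw [hΛcard] at hle
      exact absurd (lt_of_lt_of_le (Order.lt_succ δ) (le_trans hle hxc)) (lt_irrefl δ)
  have hAsetΛ : ∀ x ∈ Aset, x ∈ Λ := fun x hx => hordΛmem x hx.2.1 hx.2.2
  have hΛAset : ∀ x : ZFSet, x ∈ Λ → x ∈ M → x ∈ Aset := by
    intro x hxΛ hxM
    exact ⟨hxM, GMaux.isOrdinal_of_mem hΛo hxΛ, Order.lt_succ_iff.1 (hΛcard ▸ hΛel x hxΛ)⟩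
  -- alpha star
  set MΛ : ZFSet := ZFSet.sep (fun β => β ∈ M) Λ with hMΛdef
  set αstar : ZFSet := (ZFSet.sUnion MΛ : ZFSet) with hαdef
  have hMΛmem : ∀ β : ZFSet, β ∈ MΛ ↔ β ∈ Λ ∧ β ∈ M := fun β => ZFSet.mem_sep
  have hαord : αstar.IsOrdinal :=
    GMaux.isOrdinal_sUnion fun y hy => GMaux.isOrdinal_of_mem hΛo ((hMΛmem y).1 hy).1
  have hαcard : #αstar.toSet ≤ δ := by
    refine GMaux.card_sUnion_le hδ0 ?_ ?_
    · exact le_trans (Cardinal.mk_le_mk_of_subset (fun x hx => ((hMΛmem x).1 hx).2)) hMδ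
    · intro y hy
      exact Order.lt_succ_iff.1 (hΛcard ▸ hΛel y ((hMΛmem y).1 hy).1)
  have hαΛ : αstar ∈ Λ := hordΛmem αstar hαord hαcard
  have hups : ∀ β : ZFSet, β ∈ Λ → β ∈ M → β ⊆ αstar := by
    intro β h1 h2 z hz
    exact ZFSet.mem_sUnion.2 ⟨β, (hMΛmem β).2 ⟨h1, h2⟩, hz⟩
  have hnomax : ¬∃ m ∈ Aset, ∀ x ∈ Aset, x.toSet ⊆ m.toSet := by
    rintro ⟨m, hm, hmax⟩
    have hmem : (1 : Cardinal.{1}) ∈ {c | ∃ B ⊆ Aset, #B = c ∧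
        ∀ x ∈ Aset, ∃ y ∈ B, x.toSet ⊆ y.toSet} := by
      refine ⟨{m}, by simpa using hm, Cardinal.mk_singleton m, ?_⟩
      intro x hx
      exact ⟨m, Set.mem_singleton m, hmax x hx⟩
    have hle : GM.cofSup Aset ≤ 1 := csInf_le' hmem
    rw [hcof'] at hle
    exact absurd (hδu.trans_le hle) (not_lt.2 Cardinal.one_lt_aleph0.le)
  have hαnM : αstar ∉ M := by
    intro hαM
    refine hnomax ⟨αstar, ⟨hαM, hαord, hαcard⟩, ?_⟩
    intro x hx
    exact ZFSet.coe_subset_coe.2 (hups x (hAsetΛ x hx) hx.1)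
  have hmemα : ∀ β ∈ Aset, β ∈ αstar := by
    intro β hβ
    refine GMaux.ord_mem_of_ssubset hβ.2.1 hαord (hups β (hAsetΛ β hβ) hβ.1) ?_
    intro h
    exact hαnM (h ▸ hβ.1)
  -- choose ascent-path witnesses towards αstar
  have hch : ∀ β : ZFSet, ∃ p : ZFSet × ZFSet, β ∈ Aset →
      p.1 ∈ γ.toSet ∧ p.2 ∈ γ.toSet ∧ ZFSet.pair (t β p.1) (t αstar p.2) ∈ R := by
    intro β
    by_cases hβ : β ∈ Aset
    · obtain ⟨ζ, hζ, η, hη, hpair⟩ := hasc β (hAsetΛ β hβ) αstar hαΛ (hmemα β hβ)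
      exact ⟨(ζ, η), fun _ => ⟨hζ, hη, hpair⟩⟩
    · exact ⟨(∅, ∅), fun h => absurd h hβ⟩
  choose pf hpf using hch
  -- a cofinal colour
  have hexη : ∃ η, η ∈ γ.toSet ∧ ∀ x ∈ Aset, ∃ β ∈ Aset, (pf β).2 = η ∧ x.toSet ⊆ β.toSet := by
    by_contra hno
    push_neg at hno
    have hno' : ∀ η : ZFSet, ∃ x : ZFSet, η ∈ γ.toSet →
        x ∈ Aset ∧ ∀ β ∈ Aset, (pf β).2 = η → ¬x.toSet ⊆ β.toSet := by
      intro η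
      by_cases hη : η ∈ γ.toSet
      · obtain ⟨x, hx, hxs⟩ := hno η hη
        exact ⟨x, fun _ => ⟨hx, hxs⟩⟩
      · exact ⟨∅, fun h => absurd h hη⟩
    choose xf hxf using hno'
    set Xs : Set ZFSet := xf '' γ.toSet with hXsdef
    have hXsA : Xs ⊆ Aset := by
      rintro w ⟨η, hη, rfl⟩
      exact (hxf η hη).1
    have hXscof : ∀ z ∈ Aset, ∃ w ∈ Xs, z.toSet ⊆ w.toSet := by
      intro z hz
      have hηγ : (pf z).2 ∈ γ.toSet := (hpf z hz).2.1
      have hspec := hxf (pf z).2 hηγ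
      have hnsub : ¬(xf (pf z).2).toSet ⊆ z.toSet := hspec.2 z hz rfl
      have hsub : z.toSet ⊆ (xf (pf z).2).toSet := by
        rcases GMaux.ord_trichotomy z hz.2.1 (xf (pf z).2) hspec.1.2.1 with h | h | h
        · exact ZFSet.coe_subset_coe.2 (hspec.1.2.1.isTransitive.subset_of_mem h)
        · exact absurd (h ▸ Set.Subset.refl _) hnsub
        · exact absurd (ZFSet.coe_subset_coe.2 (hz.2.1.isTransitive.subset_of_mem h)) hnsub
      exact ⟨xf (pf z).2, Set.mem_image_of_mem _ hηγ, hsub⟩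
    have hmem : #Xs ∈ {c | ∃ B ⊆ Aset, #B = c ∧
        ∀ x ∈ Aset, ∃ y ∈ B, x.toSet ⊆ y.toSet} := ⟨Xs, hXsA, rfl, hXscof⟩
    have hle : GM.cofSup Aset ≤ #Xs := csInf_le' hmem
    rw [hcof'] at hle
    exact absurd (lt_of_le_of_lt (le_trans hle Cardinal.mk_image_le) hγδ) (lt_irrefl δ)
  obtain ⟨ηs, hηsγ, hBcof⟩ := hexη
  set sstar := t αstar ηs with hsdef
  have hss := hlev αstar hαΛ ηs hηsγ
  -- strict cofinality
  have hBstrict : ∀ x ∈ Aset, ∃ β ∈ Aset, (pf β).2 = ηs ∧ x ∈ β := by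
    intro x hx
    obtain ⟨β₁, hβ₁, hη₁, hsub₁⟩ := hBcof x hx
    by_cases hxβ : x ∈ β₁
    · exact ⟨β₁, hβ₁, hη₁, hxβ⟩
    have hxeq : x = β₁ := by
      rcases GMaux.ord_trichotomy x hx.2.1 β₁ hβ₁.2.1 with h | h | h
      · exact absurd h hxβ
      · exact h
      · exact absurd (hsub₁ h) (ZFSet.mem_irrefl β₁)
    subst hxeq
    by_contra hno2
    push_neg at hno2
    refine hnomax ⟨x, hx, ?_⟩
    intro z hz
    obtain ⟨β', hβ', hη', hsub'⟩ := hBcof z hz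
    have hβ'x : β'.toSet ⊆ x.toSet := by
      rcases GMaux.ord_trichotomy β' hβ'.2.1 x hx.2.1 with h | h | h
      · exact ZFSet.coe_subset_coe.2 (hx.2.1.isTransitive.subset_of_mem h)
      · exact h ▸ Set.Subset.refl _
      · exact absurd h (hno2 β' hβ' hη')
    exact Set.Subset.trans hsub' hβ'x
  -- the guessed code set
  set Dset : ZFSet := ZFSet.sep (fun p => ∃ β ζ, β ∈ Λ.toSet ∧ ζ ∈ γ.toSet ∧
    p = ZFSet.pair β ζ ∧ ZFSet.pair (t β ζ) sstar ∈ R) P2 with hDdef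
  have hbound : GM.Bounded Dset M := ⟨P2, hP2M, fun p hp => (ZFSet.mem_sep.1 hp).1⟩
  have happrox : GM.Approx (Order.succ δ) Dset M := by
    intro a haM hacard
    have hacard' : #a.toSet ≤ δ := Order.lt_succ_iff.1 hacard
    set σ : ZFSet := GMaux.sigmaD Λ γ a with hσdef
    have hσord : σ.IsOrdinal :=
      GMaux.isOrdinal_sUnion fun y hy => GMaux.isOrdinal_of_mem hΛo (ZFSet.mem_sep.1 hy).1
    have hσcard : #σ.toSet ≤ δ := by
      refine GMaux.card_sUnion_le hδ0 (le_trans (GMaux.card_sigma_index Λ γ a) hacard') ?_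
      intro y hy
      exact Order.lt_succ_iff.1 (hΛcard ▸ hΛel y (ZFSet.mem_sep.1 hy).1)
    have hσMem : σ ∈ M := hσM a haM (GMaux.hered_ordinal hδθ σ hσord hσcard)
    have hσA : σ ∈ Aset := ⟨hσMem, hσord, hσcard⟩
    obtain ⟨βh, hβhA, hβhη, hσβh⟩ := hBstrict σ hσA
    have hpfβh := hpf βh hβhA
    have hnodeβh : ZFSet.pair (t βh (pf βh).1) sstar ∈ R := by
      rw [hsdef, ← hβhη]
      exact hpfβh.2.2
    have hβhlev := hlev βh (hAsetΛ βh hβhA) (pf βh).1 hpfβh.1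
    set z : ZFSet := GMaux.sepD Λ γ R t a βh (pf βh).1 with hzdef
    have hza : z ⊆ a := fun w hw => (ZFSet.mem_sep.1 hw).1
    have hzM : z ∈ M := hsepM a haM βh hβhA.1 (pf βh).1 (hγM _ hpfβh.1)
      (GMaux.hered_of_subset (hMsub haM) hza)
    have hxa : Dset ∩ a = z := by
      apply ZFSet.ext
      intro p
      rw [ZFSet.mem_inter, hDdef, hzdef, GMaux.sepD, ZFSet.mem_sep, ZFSet.mem_sep]
      constructor
      · rintro ⟨⟨hpP2, β, ζ, hβΛ, hζγ, hpeq, hnode⟩, hpa⟩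
        refine ⟨hpa, β, ζ, hβΛ, hζγ, hpeq, ?_⟩
        have hnlev := hlev β hβΛ ζ hζγ
        have hβσ : β ⊆ σ := by
          intro q hq
          refine ZFSet.mem_sUnion.2 ⟨β, ?_, hq⟩
          exact ZFSet.mem_sep.2 ⟨hβΛ, ζ, hζγ, hpeq ▸ hpa⟩
        have hββh : β ∈ βh :=
          GMaux.ord_mem_of_subset_of_mem (GMaux.isOrdinal_of_mem hΛo hβΛ)
            hβhA.2.1 hβσ hσβh
        exact GMaux.pred_mem_of_level_mem htrans hss.2 ⟨hnlev.1, hnode⟩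
          ⟨hβhlev.1, hnodeβh⟩ hnlev.2 hβhlev.2 hββh
      · rintro ⟨hpa, β, ζ, hβΛ, hζγ, hpeq, hnode⟩
        refine ⟨⟨hpeq ▸ GMaux.pair_mem_P2 hβΛ hζγ, β, ζ, hβΛ, hζγ, hpeq, ?_⟩, hpa⟩
        exact htrans _ _ _ hnode hnodeβh
    rw [hxa]
    exact hzM
  obtain ⟨E, hEM, htr⟩ := hGuess Dset hbound happrox
  have htrmem : ∀ p : ZFSet, p ∈ M → (p ∈ E ↔ p ∈ Dset) := by
    intro p hp
    constructor
    · intro h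
      have h1 : p ∈ E.toSet ∩ M := ⟨h, hp⟩
      rw [htr] at h1
      exact h1.1
    · intro h
      have h1 : p ∈ Dset.toSet ∩ M := ⟨h, hp⟩
      rw [← htr] at h1
      exact h1.1
  -- codes in E give comparable nodes
  have hEchain : ∀ β ζ, β ∈ Λ.toSet → ζ ∈ γ.toSet → ZFSet.pair β ζ ∈ E →
      ∀ β' ζ', β' ∈ Λ.toSet → ζ' ∈ γ.toSet → ZFSet.pair β' ζ' ∈ E →
      (t β ζ = t β' ζ' ∨ ZFSet.pair (t β ζ) (t β' ζ') ∈ R ∨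
        ZFSet.pair (t β' ζ') (t β ζ) ∈ R) := by
    by_contra hc
    push_neg at hc
    obtain ⟨β, ζ, hβ, hζ, hE1, β', ζ', hβ', hζ', hE2, hne, hn1, hn2⟩ := hc
    have hex : ∃ p₁ p₂ : ZFSet × ZFSet,
        (p₁.1 ∈ Λ.toSet ∧ p₁.2 ∈ γ.toSet ∧ ZFSet.pair p₁.1 p₁.2 ∈ E) ∧
        (p₂.1 ∈ Λ.toSet ∧ p₂.2 ∈ γ.toSet ∧ ZFSet.pair p₂.1 p₂.2 ∈ E) ∧
        t p₁.1 p₁.2 ≠ t p₂.1 p₂.2 ∧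
        ZFSet.pair (t p₁.1 p₁.2) (t p₂.1 p₂.2) ∉ R ∧
        ZFSet.pair (t p₂.1 p₂.2) (t p₁.1 p₁.2) ∉ R :=
      ⟨(β, ζ), (β', ζ'), ⟨hβ, hζ, hE1⟩, ⟨hβ', hζ', hE2⟩, hne, hn1, hn2⟩
    have hsel : GMaux.incompD Λ γ R t E =
        {ZFSet.pair hex.choose.1 hex.choose.2,
         ZFSet.pair hex.choose_spec.choose.1 hex.choose_spec.choose.2} := by
      rw [GMaux.incompD, dif_pos hex]
    have hspec := hex.choose_spec.choose_spec
    set c1 := hex.choose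
    set c2 := hex.choose_spec.choose
    have hp1M : ZFSet.pair c1.1 c1.2 ∈ M := hincM E hEM _
      (by rw [hsel]; exact Set.mem_insert _ _)
      (GMaux.hered_mem (hMsub hEM) hspec.1.2.2)
    have hp2M : ZFSet.pair c2.1 c2.2 ∈ M := hincM E hEM _
      (by rw [hsel]; exact Set.mem_insert_of_mem _ (Set.mem_singleton _))
      (GMaux.hered_mem (hMsub hEM) hspec.2.1.2.2)
    have hp1D : ZFSet.pair c1.1 c1.2 ∈ Dset :=
      (htrmem _ hp1M).1 hspec.1.2.2
    have hp2D : ZFSet.pair c2.1 c2.2 ∈ Dset :=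
      (htrmem _ hp2M).1 hspec.2.1.2.2
    have hn1s : ZFSet.pair (t c1.1 c1.2) sstar ∈ R := by
      obtain ⟨-, β₀, ζ₀, -, -, heq, hnode⟩ := ZFSet.mem_sep.1 hp1D
      obtain ⟨e1, e2⟩ := ZFSet.pair_injective heq
      rw [e1, e2]
      exact hnode
    have hn2s : ZFSet.pair (t c2.1 c2.2) sstar ∈ R := by
      obtain ⟨-, β₀, ζ₀, -, -, heq, hnode⟩ := ZFSet.mem_sep.1 hp2D
      obtain ⟨e1, e2⟩ := ZFSet.pair_injective heq
      rw [e1, e2]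
      exact hnode
    have hT1 : t c1.1 c1.2 ∈ T.toSet := (hlev c1.1 hspec.1.1 c1.2 hspec.1.2.1).1
    have hT2 : t c2.1 c2.2 ∈ T.toSet := (hlev c2.1 hspec.2.1.1 c2.2 hspec.2.1.2.1).1
    rcases GMaux.pred_comparable hss.2 ⟨hT1, hn1s⟩ ⟨hT2, hn2s⟩ with h | h | h
    · exact hspec.2.2.1 h
    · exact hspec.2.2.2.1 h
    · exact hspec.2.2.2.2 h
  -- codes in E reach above every level
  have hEhit : ∀ α ∈ Λ.toSet, ∃ β ζ, β ∈ Λ.toSet ∧ ζ ∈ γ.toSet ∧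
      ZFSet.pair β ζ ∈ E ∧ α ∈ β.toSet := by
    by_contra hmiss
    push_neg at hmiss
    obtain ⟨α₀, hα₀Λ, hα₀⟩ := hmiss
    have hexm : ∃ α, α ∈ Λ.toSet ∧ ¬∃ β ζ, β ∈ Λ.toSet ∧ ζ ∈ γ.toSet ∧
        ZFSet.pair β ζ ∈ E ∧ α ∈ β.toSet := by
      refine ⟨α₀, hα₀Λ, ?_⟩
      rintro ⟨β, ζ, h1, h2, h3, h4⟩
      exact hα₀ β ζ h1 h2 h3 h4
    have hsel : GMaux.missD Λ γ E = {hexm.choose} := by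
      rw [GMaux.missD, dif_pos hexm]
    have hα₁spec := hexm.choose_spec
    have hα₁M : hexm.choose ∈ M := hmissM E hEM _ (by rw [hsel]; exact Set.mem_singleton _)
      (GMaux.hered_mem hΛH hα₁spec.1)
    have hα₁A : hexm.choose ∈ Aset := hΛAset _ hα₁spec.1 hα₁M
    obtain ⟨β', hβ'A, hβ'η, hα₁β'⟩ := hBstrict _ hα₁A
    have hpfβ' := hpf β' hβ'A
    have hζ'M : (pf β').1 ∈ M := hγM _ hpfβ'.1
    have hp'M : ZFSet.pair β' (pf β').1 ∈ M := hpairM β' hβ'A.1 _ hζ'M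
    have hnode' : ZFSet.pair (t β' (pf β').1) sstar ∈ R := by
      rw [hsdef, ← hβ'η]
      exact hpfβ'.2.2
    have hp'D : ZFSet.pair β' (pf β').1 ∈ Dset := ZFSet.mem_sep.2
      ⟨GMaux.pair_mem_P2 (hAsetΛ β' hβ'A) hpfβ'.1, β', (pf β').1,
        hAsetΛ β' hβ'A, hpfβ'.1, rfl, hnode'⟩
    have hp'E : ZFSet.pair β' (pf β').1 ∈ E := (htrmem _ hp'M).2 hp'D
    exact hα₁spec.2 ⟨β', (pf β').1, hAsetΛ β' hβ'A, hpfβ'.1, hp'E, hα₁β'⟩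
  -- assemble the branch
  refine ⟨ZFSet.sep (fun w => ∃ β ζ, β ∈ Λ.toSet ∧ ζ ∈ γ.toSet ∧
    ZFSet.pair β ζ ∈ E ∧ (w = t β ζ ∨ ZFSet.pair w (t β ζ) ∈ R)) T, ?_, ?_, ?_⟩
  · intro w hw
    exact (ZFSet.mem_sep.1 hw).1
  · intro s hs u hu
    obtain ⟨hsT, β, ζ, hβ, hζ, hE1, hcs⟩ := ZFSet.mem_sep.1 hs
    obtain ⟨huT, β', ζ', hβ', hζ', hE2, hcu⟩ := ZFSet.mem_sep.1 hu
    have hnlev := hlev β hβ ζ hζ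
    have hn'lev := hlev β' hβ' ζ' hζ'
    rcases hEchain β ζ hβ hζ hE1 β' ζ' hβ' hζ' hE2 with he | hR1 | hR2
    · -- equal nodes
      rcases hcs with hcs | hcs
      · rcases hcu with hcu | hcu
        · exact Or.inl (by rw [hcs, hcu, he])
        · refine Or.inr (Or.inr ?_)
          rw [hcs, he]
          exact hcu
      · rcases hcu with hcu | hcu
        · refine Or.inr (Or.inl ?_)
          rw [hcu, ← he]
          exact hcs
        · exact GMaux.pred_comparable hnlev.2 ⟨hsT, hcs⟩ ⟨huT, he ▸ hcu⟩
    · -- t β ζ below t β' ζ'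
      have hsn' : ZFSet.pair s (t β' ζ') ∈ R := by
        rcases hcs with hcs | hcs
        · rw [hcs]; exact hR1
        · exact htrans _ _ _ hcs hR1
      rcases hcu with hcu | hcu
      · refine Or.inr (Or.inl ?_)
        rw [hcu]
        exact hsn'
      · exact GMaux.pred_comparable hn'lev.2 ⟨hsT, hsn'⟩ ⟨huT, hcu⟩
    · -- t β' ζ' below t β ζ
      have hun : ZFSet.pair u (t β ζ) ∈ R := by
        rcases hcu with hcu | hcu
        · rw [hcu]; exact hR2
        · exact htrans _ _ _ hcu hR2
      rcases hcs with hcs | hcs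
      · refine Or.inr (Or.inr ?_)
        rw [hcs]
        exact hun
      · exact GMaux.pred_comparable hnlev.2 ⟨hsT, hcs⟩ ⟨huT, hun⟩
  · intro α hα
    obtain ⟨β, ζ, hβ, hζ, hE1, hαβ⟩ := hEhit α hα
    obtain ⟨w, ⟨⟨hwT, hwR⟩, hwlev⟩, -⟩ :=
      GMaux.exists_unique_level_pred htrans (hlev β hβ ζ hζ).2 hαβ
    exact ⟨w, ZFSet.mem_sep.2 ⟨hwT, β, ζ, hβ, hζ, hE1, Or.inr hwR⟩, hwlev⟩
end

section
/- Every strongly δ-guessing model is δ-guessing: if M = ⋃_{ξ<κ⁺} M_ξ is the union of an ∈-increasing chain of δ-guessing models of cardinality κ with M_ξ = ⋃_{η<ξ} M_η for every ξ of cofinality κ, then every set bounded and δ-approximated in M is guessed in M. -/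
open Cardinal

section Aux

/-- Transfinite iteration of `F` starting above `α`, continuous at limits. -/
private noncomputable def iterF (F : Ordinal.{1} → Ordinal.{1}) (α : Ordinal.{1}) :
    Ordinal.{1} → Ordinal.{1} := fun i =>
  Ordinal.limitRecOn (motive := fun _ => Ordinal.{1}) i (Order.succ α) (fun _ ih => F ih)
    (fun o _ ih => Ordinal.bsup.{1, 1} o ih)

private lemma iterF_zero (F : Ordinal.{1} → Ordinal.{1}) (α : Ordinal.{1}) :
    iterF F α 0 = Order.succ α :=
  Ordinal.limitRecOn_zero ..

private lemma iterF_succ (F : Ordinal.{1} → Ordinal.{1}) (α i : Ordinal.{1}) :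
    iterF F α (Order.succ i) = F (iterF F α i) :=
  Ordinal.limitRecOn_succ ..

private lemma iterF_limit (F : Ordinal.{1} → Ordinal.{1}) (α : Ordinal.{1}) {i : Ordinal.{1}}
    (h : Order.IsSuccLimit i) :
    iterF F α i = Ordinal.bsup.{1, 1} i (fun j _ => iterF F α j) :=
  Ordinal.limitRecOn_limit _ _ _ _ h

/-- Closure points of cofinality `κ` below `κ⁺` exist above any `α < κ⁺`. -/
private lemma closure_aux (κ : Cardinal.{1}) (hκ : κ.IsRegular)
    (f : Ordinal.{1} → Ordinal.{1})
    (hf : ∀ ζ, ζ < (Order.succ κ).ord → f ζ < (Order.succ κ).ord)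
    (α : Ordinal.{1}) (hα : α < (Order.succ κ).ord) :
    ∃ ξ, α < ξ ∧ ξ < (Order.succ κ).ord ∧ ξ.cof = κ ∧ ∀ ζ, ζ < ξ → f ζ < ξ := by
  classical
  have hsucc : (Order.succ κ).IsRegular := Cardinal.isRegular_succ hκ.aleph0_le
  have hΛlim : Order.IsSuccLimit ((Order.succ κ).ord) := Cardinal.isSuccLimit_ord hsucc.aleph0_le
  have hcof : ((Order.succ κ).ord).cof = Order.succ κ := hsucc.cof_eq
  set F : Ordinal.{1} → Ordinal.{1} :=
    fun ζ => Ordinal.bsup.{1, 1} (Order.succ ζ) (fun η _ => Order.succ (max (f η) η)) with hFdef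
  have hFgt : ∀ ζ, ζ < F ζ := by
    intro ζ
    calc ζ ≤ max (f ζ) ζ := le_max_right _ _
      _ < Order.succ (max (f ζ) ζ) := Order.lt_succ _
      _ ≤ F ζ := Ordinal.le_bsup _ ζ (Order.lt_succ ζ)
  have hFdom : ∀ ζ η, η ≤ ζ → f η < F ζ := by
    intro ζ η h
    calc f η ≤ max (f η) η := le_max_left _ _
      _ < Order.succ (max (f η) η) := Order.lt_succ _
      _ ≤ F ζ := Ordinal.le_bsup _ η (Order.lt_succ_iff.2 h)
  have hFΛ : ∀ ζ, ζ < (Order.succ κ).ord → F ζ < (Order.succ κ).ord := by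
    intro ζ hζ
    apply Ordinal.bsup_lt_ord
    · rw [hcof]
      exact Cardinal.lt_ord.1 (hΛlim.succ_lt hζ)
    · intro η hη
      have hηΛ : η < (Order.succ κ).ord := lt_of_le_of_lt (Order.lt_succ_iff.1 hη) hζ
      exact hΛlim.succ_lt (max_lt (hf η hηΛ) hηΛ)
  have hnorm : Order.IsNormal (iterF F α) := by
    rw [Ordinal.isNormal_iff_lt_succ_and_bsup_eq.{1, 0}]
    constructor
    · intro o
      rw [iterF_succ]
      exact hFgt _
    · intro o ho
      rw [iterF_limit F α ho]
      rfl
  have heΛ : ∀ i, i ≤ κ.ord → iterF F α i < (Order.succ κ).ord := by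
    intro i
    induction i using Ordinal.limitRecOn with
    | zero =>
      intro _
      rw [iterF_zero]
      exact hΛlim.succ_lt hα
    | add_one i ih =>
      intro h
      rw [Ordinal.add_one_eq_succ] at h ⊢
      rw [iterF_succ]
      exact hFΛ _ (ih (le_of_lt (lt_of_lt_of_le (Order.lt_succ i) h)))
    | limit i hi ih =>
      intro h
      rw [iterF_limit F α hi]
      apply Ordinal.bsup_lt_ord
      · rw [hcof]
        calc i.card ≤ κ.ord.card := Ordinal.card_le_card h
          _ = κ := Cardinal.card_ord κ
          _ < Order.succ κ := Order.lt_succ κ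
      · exact fun j hj => ih j hj (le_of_lt (lt_of_lt_of_le hj h))
  have hκord : Order.IsSuccLimit κ.ord := Cardinal.isSuccLimit_ord hκ.aleph0_le
  refine ⟨iterF F α κ.ord, ?_, heΛ _ le_rfl, ?_, ?_⟩
  · calc α < Order.succ α := Order.lt_succ α
      _ = iterF F α 0 := (iterF_zero F α).symm
      _ ≤ iterF F α κ.ord := hnorm.strictMono.monotone zero_le
  · rw [Ordinal.cof_map_of_isNormal hnorm hκord]
    exact hκ.cof_eq
  · intro ζ hζ
    rw [iterF_limit F α hκord] at hζ
    obtain ⟨j, hj, hζj⟩ := (Ordinal.lt_bsup _).1 hζ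
    calc f ζ < F (iterF F α j) := hFdom _ _ (le_of_lt hζj)
      _ = iterF F α (Order.succ j) := (iterF_succ F α j).symm
      _ ≤ iterF F α κ.ord := (hnorm.strictMono (hκord.succ_lt hj)).le

end Aux


/-- every strongly δ-guessing model is δ-guessing. -/
theorem stmt14
    (δ κ : Cardinal.{1}) (hδ : δ.IsRegular) (hκ : κ.IsRegular)
    (hδu : Cardinal.aleph0 < δ) (hδκ : δ ≤ κ)
    (Mc : Ordinal.{1} → Set ZFSet) (M : Set ZFSet)
    (hM : M = ⋃ ξ ∈ {ξ : Ordinal.{1} | ξ < (Order.succ κ).ord}, Mc ξ)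
    (hmono : ∀ ξ η : Ordinal.{1}, ξ < η → η < (Order.succ κ).ord →
      ∃ z ∈ Mc η, z.toSet = Mc ξ)
    (hguess : ∀ ξ : Ordinal.{1}, ξ < (Order.succ κ).ord →
      GM.IsGuessing δ (Mc ξ) ∧ #(Mc ξ) = κ)
    (hcont : ∀ ξ : Ordinal.{1}, ξ < (Order.succ κ).ord → ξ.cof = κ →
      Mc ξ = ⋃ η ∈ {η : Ordinal.{1} | η < ξ}, Mc η) :
    GM.IsGuessing δ M := by
  classical
  intro x hbdd happ
  set Λ : Ordinal.{1} := (Order.succ κ).ord with hΛdef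
  have hsuccreg : (Order.succ κ).IsRegular := Cardinal.isRegular_succ hκ.aleph0_le
  have hΛlim : Order.IsSuccLimit Λ := Cardinal.isSuccLimit_ord hsuccreg.aleph0_le
  have hcof : Λ.cof = Order.succ κ := hsuccreg.cof_eq
  -- membership in M
  have hmemM : ∀ t : ZFSet, t ∈ M ↔ ∃ ζ, ζ < Λ ∧ t ∈ Mc ζ := by
    intro t
    constructor
    · intro h
      rw [hM] at h
      rcases Set.mem_iUnion₂.1 h with ⟨ζ, hζ, ht⟩
      exact ⟨ζ, hζ, ht⟩
    · rintro ⟨ζ, hζ, ht⟩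
      rw [hM]
      exact Set.mem_biUnion hζ ht
  -- monotonicity at cofinality-κ points
  have hsub : ∀ ζ ξ : Ordinal.{1}, ζ < ξ → ξ < Λ → ξ.cof = κ → Mc ζ ⊆ Mc ξ := by
    intro ζ ξ h1 h2 h3 t ht
    rw [hcont ξ h2 h3]
    exact Set.mem_biUnion h1 ht
  -- index function
  have hidx0 : ∀ t : ZFSet, ∃ o : Ordinal.{1}, o < Λ ∧ (t ∈ M → t ∈ Mc o) := by
    intro t
    by_cases h : t ∈ M
    · obtain ⟨ζ, h1, h2⟩ := (hmemM t).1 h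
      exact ⟨ζ, h1, fun _ => h2⟩
    · exact ⟨0, hΛlim.pos, fun h' => absurd h' h⟩
  choose idx hidxΛ hidxM using hidx0
  obtain ⟨y₀, hy₀M, hxy₀⟩ := hbdd
  -- the closure function s
  have hs0 : ∀ ζ : Ordinal.{1}, ∃ o : Ordinal.{1}, (ζ < Λ → o < Λ) ∧ idx y₀ < o ∧
      ∀ a : ZFSet, a ∈ Mc ζ → idx (x ∩ a) < o := by
    intro ζ
    refine ⟨max (⨆ a : ↥(Mc ζ), Order.succ (idx (x ∩ (a : ZFSet))))
        (Order.succ (idx y₀)), fun hζ => ?_, ?_, ?_⟩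
    · apply max_lt
      · apply Ordinal.iSup_lt_of_lt_cof
        · rw [hcof, (hguess ζ hζ).2]
          exact Order.lt_succ κ
        · exact fun a => hΛlim.succ_lt (hidxΛ _)
      · exact hΛlim.succ_lt (hidxΛ _)
    · exact lt_of_lt_of_le (Order.lt_succ _) (le_max_right _ _)
    · intro a ha
      calc idx (x ∩ a) < Order.succ (idx (x ∩ a)) := Order.lt_succ _
        _ ≤ _ := le_trans
            (Ordinal.le_iSup (fun a : ↥(Mc ζ) => Order.succ (idx (x ∩ (a : ZFSet)))) ⟨a, ha⟩)
            (le_max_left _ _)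
  choose s hsΛ hsy₀ hsapp using hs0
  -- at good points, x is guessed
  have hGuessAt : ∀ ξ : Ordinal.{1}, ξ < Λ → ξ.cof = κ → 0 < ξ → (∀ ζ, ζ < ξ → s ζ < ξ) →
      GM.Guessed x (Mc ξ) := by
    intro ξ hξΛ hξcof hξ0 hξcl
    apply (hguess ξ hξΛ).1
    · exact ⟨y₀, hsub (idx y₀) ξ (lt_trans (hsy₀ 0) (hξcl 0 hξ0)) hξΛ hξcof (hidxM y₀ hy₀M),
        hxy₀⟩
    · intro a ha haδ
      rw [hcont ξ hξΛ hξcof] at ha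
      rcases Set.mem_iUnion₂.1 ha with ⟨η, hηξ, haη⟩
      have haM : a ∈ M := (hmemM a).2 ⟨η, lt_trans hηξ hξΛ, haη⟩
      have hxaM : (x ∩ a) ∈ M := happ a haM haδ
      have hlt : idx (x ∩ a) < ξ := lt_trans (hsapp η a haη) (hξcl η hηξ)
      exact hsub _ ξ hlt hξΛ hξcof (hidxM _ hxaM)
  -- choose guesses and regressive indices at good points
  have hkey : ∀ ξ : Ordinal.{1}, ∃ y : ZFSet, ∃ r : Ordinal.{1},
      ξ < Λ → ξ.cof = κ → 0 < ξ → (∀ ζ, ζ < ξ → s ζ < ξ) →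
        r < ξ ∧ y ∈ Mc r ∧ y.toSet ∩ Mc ξ = x.toSet ∩ Mc ξ := by
    intro ξ
    by_cases hG : ξ < Λ ∧ ξ.cof = κ ∧ 0 < ξ ∧ ∀ ζ, ζ < ξ → s ζ < ξ
    · obtain ⟨h1, h2, h3, h4⟩ := hG
      obtain ⟨y, hy, hyx⟩ := hGuessAt ξ h1 h2 h3 h4
      rw [hcont ξ h1 h2] at hy
      rcases Set.mem_iUnion₂.1 hy with ⟨r, hrξ, hyr⟩
      exact ⟨y, r, fun _ _ _ _ => ⟨hrξ, hyr, hyx⟩⟩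
    · exact ⟨∅, 0, fun h1 h2 h3 h4 => absurd ⟨h1, h2, h3, h4⟩ hG⟩
  choose yf rf hyrf using hkey
  -- the key claim: a single guess works cofinally often
  have hclaim : ∃ y : ZFSet, y ∈ M ∧ ∀ α : Ordinal.{1}, α < Λ →
      ∃ ξ, α < ξ ∧ ξ < Λ ∧ ξ.cof = κ ∧ y.toSet ∩ Mc ξ = x.toSet ∩ Mc ξ := by
    by_contra hcon
    push_neg at hcon
    choose A hAΛ hAprop using hcon
    -- Step A: for each η, the good ξ with rf ξ ≤ η are bounded
    have hbd : ∀ η : Ordinal.{1}, η < Λ → ∃ b, b < Λ ∧ ∀ ξ, ξ < Λ → ξ.cof = κ → 0 < ξ →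
        (∀ ζ, ζ < ξ → s ζ < ξ) → rf ξ ≤ η → ξ ≤ b := by
      intro η hη
      obtain ⟨η', hηη', hη'Λ, hη'cof, hη'cl⟩ := closure_aux κ hκ s (fun ζ hζ => hsΛ ζ hζ) η hη
      have hsubM : ∀ y : ZFSet, y ∈ Mc η' → y ∈ M := fun y hy => (hmemM y).2 ⟨η', hη'Λ, hy⟩
      have hβΛ : (⨆ y : ↥(Mc η'), A (y : ZFSet) (hsubM _ y.2)) < Λ := by
        apply Ordinal.iSup_lt_of_lt_cof
        · rw [hcof, (hguess η' hη'Λ).2]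
          exact Order.lt_succ κ
        · exact fun y => hAΛ _ _
      refine ⟨max ((⨆ y : ↥(Mc η'), A (y : ZFSet) (hsubM _ y.2))) η',
        max_lt hβΛ hη'Λ, ?_⟩
      intro ξ hξΛ hξcof hξ0 hξcl hrη
      by_contra hgt
      push_neg at hgt
      obtain ⟨hr, hyMc, hyx⟩ := hyrf ξ hξΛ hξcof hξ0 hξcl
      have hyη' : yf ξ ∈ Mc η' := hsub (rf ξ) η' (lt_of_le_of_lt hrη hηη') hη'Λ hη'cof hyMc
      have hyM : yf ξ ∈ M := hsubM _ hyη'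
      refine hAprop (yf ξ) hyM ξ ?_ hξΛ hξcof hyx
      calc A (yf ξ) hyM ≤ _ := Ordinal.le_iSup
            (fun y : ↥(Mc η') => A (y : ZFSet) (hsubM _ y.2)) ⟨yf ξ, hyη'⟩
        _ ≤ max ((⨆ y : ↥(Mc η'), A (y : ZFSet) (hsubM _ y.2))) η' :=
            le_max_left _ _
        _ < ξ := hgt
    choose bf hbfΛ hbf using hbd
    -- Step B: a good point closed under bf gives a contradiction
    have hf2 : ∀ ζ : Ordinal.{1}, ∃ o : Ordinal.{1}, (ζ < Λ → o < Λ) ∧ s ζ ≤ o ∧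
        ∀ h : ζ < Λ, bf ζ h ≤ o := by
      intro ζ
      by_cases h : ζ < Λ
      · exact ⟨max (s ζ) (bf ζ h), fun _ => max_lt (hsΛ ζ h) (hbfΛ ζ h), le_max_left _ _,
          fun h' => le_max_right _ _⟩
      · exact ⟨s ζ, fun h' => absurd h' h, le_rfl, fun h' => absurd h' h⟩
    choose f2 hf2Λ hf2s hf2b using hf2
    obtain ⟨ξ, hξ0, hξΛ, hξcof, hξcl⟩ := closure_aux κ hκ f2 hf2Λ 0 hΛlim.pos
    have hscl : ∀ ζ, ζ < ξ → s ζ < ξ := fun ζ hζ =>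
      lt_of_le_of_lt (hf2s ζ) (hξcl ζ hζ)
    obtain ⟨hr, hyMc, hyx⟩ := hyrf ξ hξΛ hξcof hξ0 hscl
    have hrΛ : rf ξ < Λ := lt_trans hr hξΛ
    have h1 : ξ ≤ bf (rf ξ) hrΛ := hbf (rf ξ) hrΛ ξ hξΛ hξcof hξ0 hscl le_rfl
    have h2 : bf (rf ξ) hrΛ < ξ := lt_of_le_of_lt (hf2b (rf ξ) hrΛ) (hξcl (rf ξ) hr)
    exact absurd h1 (not_le.2 h2)
  obtain ⟨y, hyM, hy⟩ := hclaim
  refine ⟨y, hyM, ?_⟩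
  ext t
  simp only [Set.mem_inter_iff]
  constructor
  · rintro ⟨hty, htM⟩
    refine ⟨?_, htM⟩
    obtain ⟨ζ, hζΛ, htζ⟩ := (hmemM t).1 htM
    obtain ⟨ξ, hζξ, hξΛ, hξcof, heq⟩ := hy ζ hζΛ
    have htξ : t ∈ Mc ξ := hsub ζ ξ hζξ hξΛ hξcof htζ
    have h2 : t ∈ x.toSet ∩ Mc ξ := heq ▸ (Set.mem_inter hty htξ)
    exact h2.1
  · rintro ⟨htx, htM⟩
    refine ⟨?_, htM⟩
    obtain ⟨ζ, hζΛ, htζ⟩ := (hmemM t).1 htM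
    obtain ⟨ξ, hζξ, hξΛ, hξcof, heq⟩ := hy ζ hζΛ
    have htξ : t ∈ Mc ξ := hsub ζ ξ hζξ hξΛ hξcof htζ
    have h2 : t ∈ y.toSet ∩ Mc ξ := heq.symm ▸ (Set.mem_inter htx htξ)
    exact h2.1
end
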